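/- arXiv:1409.4097 — 4 statements merged into one kernel-verified Lean document; each statement's English description precedes it below -/
import Mathlib

section
/- For two probability measures μ₁, μ₂ on a compact interval I with cumulative distribution functions F₁, F₂, the Kolmogorov distance sup_{x∈I} |F₁(x) - F₂(x)| equals the supremum of ∫_I f (dμ₁ - dμ₂) over all absolutely continuous functions f with ∫_I |f'(x)| dx ≤ 1. -/
open MeasureTheory Set
open scoped ENNReal NNReal

section KolmAux

variable {a b : ℝ}

/-- The set of test values. -/
def kolmTestSet (μ₁ μ₂ : Measure (Set.Icc a b)) : Set ℝ :=
  { r : ℝ | ∃ f g : ℝ → ℝ, IntegrableOn g (Set.Icc a b) ∧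
        (∫ t in Set.Icc a b, |g t|) ≤ 1 ∧
        (∀ x ∈ Set.Icc a b, f x = f a + ∫ t in a..x, g t) ∧
        r = (∫ x, f (x : ℝ) ∂μ₁) - ∫ x, f (x : ℝ) ∂μ₂ }

lemma contPrim (hab : a ≤ b) {g : ℝ → ℝ} (hg : IntegrableOn g (Set.Icc a b)) :
    Continuous (fun y : Set.Icc a b => ∫ t in a..(y : ℝ), g t) := by
  have h : ContinuousOn (fun x => ∫ t in a..x, g t) (Set.Icc a b) := by
    rw [← Set.uIcc_of_le hab]
    exact intervalIntegral.continuousOn_primitive_interval (by rwa [Set.uIcc_of_le hab])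
  exact h.restrict

lemma Continuous.integrable_icc (μ : Measure (Set.Icc a b)) [IsFiniteMeasure μ]
    {F : Set.Icc a b → ℝ} (hF : Continuous F) : Integrable F μ := by
  haveI : CompactSpace (Set.Icc a b) := isCompact_iff_compactSpace.mp isCompact_Icc
  exact hF.integrable_of_hasCompactSupport
    ((isClosed_tsupport F).isCompact)

lemma integrable_of_primitive (hab : a ≤ b) (μ : Measure (Set.Icc a b)) [IsFiniteMeasure μ]
    {f g : ℝ → ℝ} (hg : IntegrableOn g (Set.Icc a b))
    (hf : ∀ x ∈ Set.Icc a b, f x = f a + ∫ t in a..x, g t) :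
    Integrable (fun y : Set.Icc a b => f ↑y) μ := by
  have : (fun y : Set.Icc a b => f ↑y)
      = fun y : Set.Icc a b => f a + ∫ t in a..(y : ℝ), g t := by
    funext y; exact hf ↑y y.2
  rw [this]
  exact (continuous_const.add (contPrim hab hg)).integrable_icc μ


lemma kolmTestSet_neg {μ₁ μ₂ : Measure (Set.Icc a b)} {r : ℝ}
    (hr : r ∈ kolmTestSet μ₁ μ₂) : -r ∈ kolmTestSet μ₁ μ₂ := by
  obtain ⟨f, g, hg, hg1, hf, rfl⟩ := hr
  refine ⟨fun t => -f t, fun t => -g t, hg.neg, by simpa using hg1, fun x hx => ?_, ?_⟩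
  · show -f x = -f a + ∫ t in a..x, -g t
    rw [hf x hx, intervalIntegral.integral_neg]; ring
  · show -((∫ x, f (x : ℝ) ∂μ₁) - ∫ x, f (x : ℝ) ∂μ₂)
      = (∫ x, -f (x : ℝ) ∂μ₁) - ∫ x, -f (x : ℝ) ∂μ₂
    rw [integral_neg, integral_neg]; ring

lemma sandwich {c δ : ℝ} (hδ : 0 < δ) {f : ℝ → ℝ}
    (h1 : ∀ t ∈ Set.Icc a b, t ≤ c → f t = 1)
    (h0 : ∀ t ∈ Set.Icc a b, c + δ ≤ t → f t = 0)
    (hb01 : ∀ t ∈ Set.Icc a b, 0 ≤ f t ∧ f t ≤ 1)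
    (μ : Measure (Set.Icc a b)) [IsProbabilityMeasure μ]
    (hfint : Integrable (fun y : Set.Icc a b => f ↑y) μ) :
    (μ {y : Set.Icc a b | (y : ℝ) ≤ c}).toReal ≤ (∫ y, f (y : ℝ) ∂μ) ∧
    (∫ y, f (y : ℝ) ∂μ) ≤ (μ {y : Set.Icc a b | (y : ℝ) ≤ c}).toReal
      + (μ (Subtype.val ⁻¹' Set.Ioc c (c + δ))).toReal := by
  have hm1 : MeasurableSet {y : Set.Icc a b | (y : ℝ) ≤ c} :=
    (measurableSet_Iic (a := c)).preimage measurable_subtype_coe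
  have hmA : MeasurableSet (Subtype.val ⁻¹' Set.Ioc c (c + δ) : Set (Set.Icc a b)) :=
    (measurableSet_Ioc).preimage measurable_subtype_coe
  have hind1 : Integrable
      (fun y : Set.Icc a b => ({y : Set.Icc a b | (y : ℝ) ≤ c}).indicator
        (fun _ => (1 : ℝ)) y) μ := (integrable_const 1).indicator hm1
  have hindA : Integrable
      (fun y : Set.Icc a b => (Subtype.val ⁻¹' Set.Ioc c (c + δ)).indicator
        (fun _ => (1 : ℝ)) y) μ := (integrable_const 1).indicator hmA
  have e1 : (∫ y : Set.Icc a b, ({y : Set.Icc a b | (y : ℝ) ≤ c}).indicator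
      (fun _ => (1 : ℝ)) y ∂μ) = (μ {y : Set.Icc a b | (y : ℝ) ≤ c}).toReal := by
    rw [integral_indicator_const (1 : ℝ) hm1, smul_eq_mul, mul_one, measureReal_def]
  have eA : (∫ y : Set.Icc a b, (Subtype.val ⁻¹' Set.Ioc c (c + δ)).indicator
      (fun _ => (1 : ℝ)) y ∂μ) = (μ (Subtype.val ⁻¹' Set.Ioc c (c + δ))).toReal := by
    rw [integral_indicator_const (1 : ℝ) hmA, smul_eq_mul, mul_one, measureReal_def]
  constructor
  · rw [← e1]
    refine integral_mono hind1 hfint fun y => ?_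
    by_cases hy : (y : ℝ) ≤ c
    · have hy' : y ∈ {y : Set.Icc a b | (y : ℝ) ≤ c} := hy
      rw [Set.indicator_of_mem hy', h1 ↑y y.2 hy]
    · have hy' : y ∉ {y : Set.Icc a b | (y : ℝ) ≤ c} := hy
      rw [Set.indicator_of_notMem hy']
      exact (hb01 ↑y y.2).1
  · have := integral_add hind1 hindA
    calc (∫ y, f (y : ℝ) ∂μ)
        ≤ ∫ y : Set.Icc a b, (({y : Set.Icc a b | (y : ℝ) ≤ c}).indicator
            (fun _ => (1 : ℝ)) y
          + (Subtype.val ⁻¹' Set.Ioc c (c + δ)).indicator (fun _ => (1 : ℝ)) y) ∂μ := by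
          refine integral_mono hfint (hind1.add hindA) fun y => ?_
          by_cases hy : (y : ℝ) ≤ c
          · have hyA : (y : Set.Icc a b) ∉ (Subtype.val ⁻¹' Set.Ioc c (c + δ)) :=
              fun h => absurd h.1 (not_lt.2 hy)
            have hy' : y ∈ {y : Set.Icc a b | (y : ℝ) ≤ c} := hy
            rw [Set.indicator_of_mem hy', Set.indicator_of_notMem hyA,
              h1 ↑y y.2 hy]
            norm_num
          · by_cases hy2 : (y : ℝ) ≤ c + δ
            · have hyA : (y : Set.Icc a b) ∈ (Subtype.val ⁻¹' Set.Ioc c (c + δ)) :=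
                ⟨not_le.1 hy, hy2⟩
              have hy' : y ∉ {y : Set.Icc a b | (y : ℝ) ≤ c} := hy
              rw [Set.indicator_of_notMem hy', Set.indicator_of_mem hyA]
              have := (hb01 ↑y y.2).2; linarith
            · have hyA : (y : Set.Icc a b) ∉ (Subtype.val ⁻¹' Set.Ioc c (c + δ)) :=
                fun h => hy2 h.2
              have hy' : y ∉ {y : Set.Icc a b | (y : ℝ) ≤ c} := hy
              rw [Set.indicator_of_notMem hy', Set.indicator_of_notMem hyA,
                h0 ↑y y.2 (not_le.1 hy2).le]
              norm_num
      _ = (μ {y : Set.Icc a b | (y : ℝ) ≤ c}).toReal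
          + (μ (Subtype.val ⁻¹' Set.Ioc c (c + δ))).toReal := by
          rw [integral_add hind1 hindA, e1, eA]

lemma aux_lower (hab : a ≤ b) (μ₁ μ₂ : Measure (Set.Icc a b))
    [IsProbabilityMeasure μ₁] [IsProbabilityMeasure μ₂]
    (x : Set.Icc a b) {ε : ℝ} (hε : 0 < ε) :
    ∃ r ∈ kolmTestSet μ₁ μ₂,
      ((μ₁ {y | (y : ℝ) ≤ x}).toReal - (μ₂ {y | (y : ℝ) ≤ x}).toReal ≤ r + ε ∧
       (μ₂ {y | (y : ℝ) ≤ x}).toReal - (μ₁ {y | (y : ℝ) ≤ x}).toReal ≤ -r + ε) := by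
  set c : ℝ := (x : ℝ) with hc
  have hca : a ≤ c := x.2.1
  -- find a small δ
  obtain ⟨δ, hδ, hA1, hA2⟩ : ∃ δ : ℝ, 0 < δ ∧
      (μ₁ (Subtype.val ⁻¹' Set.Ioc c (c + δ))).toReal < ε ∧
      (μ₂ (Subtype.val ⁻¹' Set.Ioc c (c + δ))).toReal < ε := by
    set s : ℕ → Set (Set.Icc a b) :=
      fun n => Subtype.val ⁻¹' Set.Ioc c (c + 1 / ((n : ℝ) + 1)) with hs
    have hmeas_s : ∀ n, NullMeasurableSet (s n) μ₁ ∧ NullMeasurableSet (s n) μ₂ := fun n =>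
      ⟨((measurableSet_Ioc).preimage measurable_subtype_coe).nullMeasurableSet,
       ((measurableSet_Ioc).preimage measurable_subtype_coe).nullMeasurableSet⟩
    have hanti : Antitone s := by
      intro m n hmn
      refine Set.preimage_mono (Set.Ioc_subset_Ioc_right (add_le_add_right ?_ c))
      have h1 : (0:ℝ) < (m : ℝ) + 1 := by positivity
      refine one_div_le_one_div_of_le h1 (by exact_mod_cast add_le_add_left hmn 1)
    have hiInter : ⋂ n, s n = ∅ := by
      ext y
      simp only [Set.mem_iInter, hs, Set.mem_preimage, Set.mem_Ioc,
        Set.mem_empty_iff_false, iff_false, not_forall]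
      by_contra hcon
      push_neg at hcon
      obtain ⟨n, hn⟩ := exists_nat_one_div_lt (sub_pos.2 (hcon 0).1)
      have := (hcon n).2
      linarith
    have T1 : Filter.Tendsto (fun n => μ₁ (s n)) Filter.atTop (nhds 0) := by
      have := tendsto_measure_iInter_atTop (μ := μ₁) (fun n => (hmeas_s n).1) hanti
        ⟨0, measure_ne_top _ _⟩
      rwa [hiInter, measure_empty] at this
    have T2 : Filter.Tendsto (fun n => μ₂ (s n)) Filter.atTop (nhds 0) := by
      have := tendsto_measure_iInter_atTop (μ := μ₂) (fun n => (hmeas_s n).2) hanti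
        ⟨0, measure_ne_top _ _⟩
      rwa [hiInter, measure_empty] at this
    have hpos : (0 : ℝ≥0∞) < ENNReal.ofReal ε := ENNReal.ofReal_pos.2 hε
    obtain ⟨N, hN1, hN2⟩ :=
      ((T1.eventually (gt_mem_nhds hpos)).and (T2.eventually (gt_mem_nhds hpos))).exists
    exact ⟨1 / ((N : ℝ) + 1), by positivity,
      ENNReal.toReal_lt_of_lt_ofReal hN1, ENNReal.toReal_lt_of_lt_ofReal hN2⟩
  -- the test function
  set g : ℝ → ℝ := (Set.Ioc c (c + δ)).indicator (fun _ => -δ⁻¹) with hgdef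
  set f : ℝ → ℝ := fun t => 1 + ∫ s in a..t, g s with hfdef
  have hgvol : Integrable g volume := by
    rw [hgdef, integrable_indicator_iff measurableSet_Ioc]
    exact integrableOn_const (by rw [Real.volume_Ioc]; exact ENNReal.ofReal_ne_top)
  have hgI : IntegrableOn g (Set.Icc a b) := hgvol.integrableOn
  have habsg : ∀ t, |g t| = (Set.Ioc c (c + δ)).indicator (fun _ => δ⁻¹) t := by
    intro t
    by_cases ht : t ∈ Set.Ioc c (c + δ)
    · rw [hgdef, Set.indicator_of_mem ht, Set.indicator_of_mem ht, abs_neg,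
        abs_of_nonneg (inv_nonneg.2 hδ.le)]
    · rw [hgdef, Set.indicator_of_notMem ht, Set.indicator_of_notMem ht, abs_zero]
  have hg1 : (∫ t in Set.Icc a b, |g t|) ≤ 1 := by
    calc (∫ t in Set.Icc a b, |g t|)
        = ∫ t in Set.Icc a b, (Set.Ioc c (c + δ)).indicator (fun _ => δ⁻¹) t :=
          integral_congr_ae (Filter.Eventually.of_forall fun t => habsg t)
      _ = ∫ t in Set.Icc a b ∩ Set.Ioc c (c + δ), δ⁻¹ :=
          setIntegral_indicator measurableSet_Ioc
      _ = (volume (Set.Icc a b ∩ Set.Ioc c (c + δ))).toReal * δ⁻¹ := by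
          rw [setIntegral_const, smul_eq_mul, measureReal_def]
      _ ≤ δ * δ⁻¹ := by
          refine mul_le_mul_of_nonneg_right ?_ (inv_nonneg.2 hδ.le)
          calc (volume (Set.Icc a b ∩ Set.Ioc c (c + δ))).toReal
              ≤ (volume (Set.Ioc c (c + δ))).toReal := by
                refine ENNReal.toReal_mono ?_ (measure_mono Set.inter_subset_right)
                rw [Real.volume_Ioc]; exact ENNReal.ofReal_ne_top
            _ = δ := by rw [Real.volume_Ioc, add_sub_cancel_left, ENNReal.toReal_ofReal hδ.le]
      _ = 1 := mul_inv_cancel₀ hδ.ne'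
  have hfspec : ∀ x' ∈ Set.Icc a b, f x' = f a + ∫ t in a..x', g t := by
    intro x' _
    rw [hfdef]
    simp [intervalIntegral.integral_same]
  -- explicit formula
  have hval : ∀ t, a ≤ t → f t = 1 - δ⁻¹ * max (min t (c + δ) - c) 0 := by
    intro t ht
    rw [hfdef]
    simp only
    rw [intervalIntegral.integral_of_le ht, hgdef,
      setIntegral_indicator measurableSet_Ioc, setIntegral_const,
      Set.Ioc_inter_Ioc, max_eq_right hca, measureReal_def, Real.volume_Ioc, smul_eq_mul,
      ENNReal.toReal_ofReal']
    ring
  have h1 : ∀ t ∈ Set.Icc a b, t ≤ c → f t = 1 := by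
    intro t htm htc
    rw [hval t htm.1, min_eq_left (htc.trans (le_add_of_nonneg_right hδ.le)),
      max_eq_right (sub_nonpos.2 htc)]
    ring
  have h0 : ∀ t ∈ Set.Icc a b, c + δ ≤ t → f t = 0 := by
    intro t htm htc
    rw [hval t htm.1, min_eq_right htc, add_sub_cancel_left, max_eq_left hδ.le,
      inv_mul_cancel₀ hδ.ne']
    ring
  have hb01 : ∀ t ∈ Set.Icc a b, 0 ≤ f t ∧ f t ≤ 1 := by
    intro t htm
    rw [hval t htm.1]
    have hm0 : 0 ≤ max (min t (c + δ) - c) 0 := le_max_right _ _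
    have hmδ : max (min t (c + δ) - c) 0 ≤ δ := by
      refine max_le ?_ hδ.le
      have := min_le_right t (c + δ)
      linarith
    have h2 : δ⁻¹ * max (min t (c + δ) - c) 0 ≤ δ⁻¹ * δ :=
      mul_le_mul_of_nonneg_left hmδ (inv_nonneg.2 hδ.le)
    rw [inv_mul_cancel₀ hδ.ne'] at h2
    have h3 : 0 ≤ δ⁻¹ * max (min t (c + δ) - c) 0 :=
      mul_nonneg (inv_nonneg.2 hδ.le) hm0
    constructor <;> linarith
  have hfint1 : Integrable (fun y : Set.Icc a b => f ↑y) μ₁ :=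
    integrable_of_primitive hab μ₁ hgI hfspec
  have hfint2 : Integrable (fun y : Set.Icc a b => f ↑y) μ₂ :=
    integrable_of_primitive hab μ₂ hgI hfspec
  obtain ⟨hlow1, hup1⟩ := sandwich hδ h1 h0 hb01 μ₁ hfint1
  obtain ⟨hlow2, hup2⟩ := sandwich hδ h1 h0 hb01 μ₂ hfint2
  refine ⟨(∫ y, f (y : ℝ) ∂μ₁) - ∫ y, f (y : ℝ) ∂μ₂, ⟨f, g, hgI, hg1, hfspec, rfl⟩, ?_, ?_⟩
  · linarith
  · linarith

lemma integral_primitive (hab : a ≤ b) (μ : Measure (Set.Icc a b)) [IsProbabilityMeasure μ]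
    {f g : ℝ → ℝ} (hg : IntegrableOn g (Set.Icc a b))
    (hf : ∀ x ∈ Set.Icc a b, f x = f a + ∫ t in a..x, g t) :
    Integrable (fun t => (μ (Subtype.val ⁻¹' Set.Ici t)).toReal * g t)
      (volume.restrict (Set.Ioc a b)) ∧
    ∫ x, f (x : ℝ) ∂μ = f a +
      ∫ t in Set.Ioc a b, (μ (Subtype.val ⁻¹' Set.Ici t)).toReal * g t := by
  set ν : Measure ℝ := volume.restrict (Set.Ioc a b) with hν
  set h : Set.Icc a b → ℝ → ℝ := fun x t => if t ≤ (x : ℝ) then g t else 0 with hh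
  have hgν : Integrable g ν := hg.mono_set Set.Ioc_subset_Icc_self
  have hA : MeasurableSet {p : Set.Icc a b × ℝ | p.2 ≤ (p.1 : ℝ)} :=
    (isClosed_le continuous_snd (continuous_subtype_val.comp continuous_fst)).measurableSet
  have hsnd : Integrable (fun p : Set.Icc a b × ℝ => g p.2) (μ.prod ν) := by
    simpa using (integrable_const (1 : ℝ)).smul_prod hgν
  have huncurry : Function.uncurry h
      = Set.indicator {p : Set.Icc a b × ℝ | p.2 ≤ (p.1 : ℝ)} (fun p => g p.2) := by
    funext p
    simp only [Function.uncurry, hh, Set.indicator_apply, Set.mem_setOf_eq]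
  have hmeas : AEStronglyMeasurable (Function.uncurry h) (μ.prod ν) := by
    rw [huncurry]
    exact hsnd.aestronglyMeasurable.indicator hA
  have hint : Integrable (Function.uncurry h) (μ.prod ν) := by
    refine hsnd.norm.mono' hmeas (Filter.Eventually.of_forall fun p => ?_)
    rw [huncurry]
    exact (norm_indicator_le_norm_self _ _).trans (le_refl _)
  have step2 : ∀ x : Set.Icc a b, (∫ t in a..(x : ℝ), g t) = ∫ t, h x t ∂ν := by
    intro x
    rw [intervalIntegral.integral_of_le x.2.1]
    have e1 : ∀ t, h x t = (Set.Iic (x : ℝ)).indicator g t := by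
      intro t; simp [hh, Set.indicator_apply]
    calc ∫ t in Set.Ioc a (x : ℝ), g t = ∫ t in Set.Ioc a b ∩ Set.Iic (x : ℝ), g t := by
          rw [Set.Ioc_inter_Iic, min_eq_right x.2.2]
      _ = ∫ t in Set.Ioc a b, (Set.Iic (x : ℝ)).indicator g t := by
          rw [setIntegral_indicator measurableSet_Iic]
      _ = ∫ t, h x t ∂ν := by rw [hν]; exact (integral_congr_ae (Filter.Eventually.of_forall
            fun t => (e1 t).symm))
  have step4 : ∀ t : ℝ, (∫ x, h x t ∂μ) = (μ (Subtype.val ⁻¹' Set.Ici t)).toReal * g t := by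
    intro t
    have e2 : (fun x : Set.Icc a b => h x t)
        = (Subtype.val ⁻¹' Set.Ici t : Set (Set.Icc a b)).indicator (fun _ => g t) := by
      funext x
      by_cases hx : t ≤ (x : ℝ) <;>
        simp [hh, Set.indicator_apply, hx]
    rw [e2, integral_indicator_const (g t)
      ((measurableSet_Ici (a := t)).preimage measurable_subtype_coe), smul_eq_mul, measureReal_def]
  have hswap2 : Integrable (fun t => ∫ x, h x t ∂μ) ν := hint.swap.integral_prod_left
  have hswapInt : Integrable (fun t => (μ (Subtype.val ⁻¹' Set.Ici t)).toReal * g t) ν := by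
    refine hswap2.congr (Filter.Eventually.of_forall fun t => step4 t)
  refine ⟨hswapInt, ?_⟩
  have step1 : ∫ x, f (x : ℝ) ∂μ = f a + ∫ x, (∫ t in a..(x : ℝ), g t) ∂μ := by
    rw [integral_congr_ae (Filter.Eventually.of_forall fun x : Set.Icc a b => hf ↑x x.2),
      integral_add (integrable_const _) ((contPrim hab hg).integrable_icc μ)]
    simp
  rw [step1]
  congr 1
  calc ∫ x, (∫ t in a..(x : ℝ), g t) ∂μ = ∫ x, ∫ t, h x t ∂ν ∂μ :=
        integral_congr_ae (Filter.Eventually.of_forall fun x => step2 x)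
    _ = ∫ t, ∫ x, h x t ∂μ ∂ν := integral_integral_swap hint
    _ = ∫ t in Set.Ioc a b, (μ (Subtype.val ⁻¹' Set.Ici t)).toReal * g t :=
        integral_congr_ae (Filter.Eventually.of_forall fun t => step4 t)

lemma countable_atoms (μ : Measure (Set.Icc a b)) [IsFiniteMeasure μ] :
    Set.Countable {t : ℝ | μ (Subtype.val ⁻¹' {t}) ≠ 0} := by
  have h := MeasureTheory.Measure.countable_meas_pos_of_disjoint_iUnion
    (μ := μ) (As := fun t : ℝ => Subtype.val ⁻¹' {t})
    (fun t => (measurableSet_singleton t).preimage measurable_subtype_coe)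
    (fun s t hst => Set.disjoint_left.2 (by
      rintro y hy hy'
      exact hst (by simp only [Set.mem_preimage, Set.mem_singleton_iff] at hy hy'; rw [← hy, ← hy'])))
  simpa [pos_iff_ne_zero] using h

lemma meas_Ici_eq (μ : Measure (Set.Icc a b)) [IsProbabilityMeasure μ] {t : ℝ}
    (h : μ (Subtype.val ⁻¹' {t}) = 0) :
    (μ (Subtype.val ⁻¹' Set.Ici t)).toReal = 1 - (μ (Subtype.val ⁻¹' Set.Iic t)).toReal := by
  have hu : (Subtype.val ⁻¹' Set.Iic t : Set (Set.Icc a b)) ∪ Subtype.val ⁻¹' Set.Ici t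
      = Set.univ := by
    ext y; simp [le_total]
  have hi : (Subtype.val ⁻¹' Set.Iic t : Set (Set.Icc a b)) ∩ Subtype.val ⁻¹' Set.Ici t
      = Subtype.val ⁻¹' {t} := by
    ext y
    simp only [Set.mem_inter_iff, Set.mem_preimage, Set.mem_Iic, Set.mem_Ici,
      Set.mem_singleton_iff]
    exact ⟨fun ⟨h1, h2⟩ => le_antisymm h1 h2, fun h => ⟨h.le, h.ge⟩⟩
  have h2 := measure_union_add_inter (μ := μ) (t := Subtype.val ⁻¹' Set.Ici t)
    (Subtype.val ⁻¹' Set.Iic t) ((measurableSet_Ici (a := t)).preimage measurable_subtype_coe)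
  rw [hu, hi, h, measure_univ, add_zero] at h2
  have h3 := congrArg ENNReal.toReal h2
  rw [ENNReal.toReal_one, ENNReal.toReal_add (measure_ne_top μ _) (measure_ne_top μ _)] at h3
  linarith

lemma aux_upper (hab : a ≤ b) (μ₁ μ₂ : Measure (Set.Icc a b))
    [IsProbabilityMeasure μ₁] [IsProbabilityMeasure μ₂]
    {f g : ℝ → ℝ} (hg : IntegrableOn g (Set.Icc a b))
    (hg1 : (∫ t in Set.Icc a b, |g t|) ≤ 1)
    (hf : ∀ x ∈ Set.Icc a b, f x = f a + ∫ t in a..x, g t) :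
    (∫ x, f (x : ℝ) ∂μ₁) - (∫ x, f (x : ℝ) ∂μ₂) ≤
      ⨆ x : Set.Icc a b,
        |(μ₁ {y | (y : ℝ) ≤ x}).toReal - (μ₂ {y | (y : ℝ) ≤ x}).toReal| := by
  set ν : Measure ℝ := volume.restrict (Set.Ioc a b) with hν
  set K := ⨆ x : Set.Icc a b,
      |(μ₁ {y | (y : ℝ) ≤ x}).toReal - (μ₂ {y | (y : ℝ) ≤ x}).toReal| with hK
  have hbdd : BddAbove (Set.range fun x : Set.Icc a b =>
      |(μ₁ {y | (y : ℝ) ≤ x}).toReal - (μ₂ {y | (y : ℝ) ≤ x}).toReal|) := by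
    refine ⟨1, ?_⟩
    rintro _ ⟨x, rfl⟩
    have h1 : (μ₁ {y | (y : ℝ) ≤ x}).toReal ≤ 1 := by
      have := ENNReal.toReal_mono ENNReal.one_ne_top (prob_le_one (μ := μ₁)
        (s := {y | (y : ℝ) ≤ x}))
      simpa using this
    have h2 : (μ₂ {y | (y : ℝ) ≤ x}).toReal ≤ 1 := by
      have := ENNReal.toReal_mono ENNReal.one_ne_top (prob_le_one (μ := μ₂)
        (s := {y | (y : ℝ) ≤ x}))
      simpa using this
    have h3 : 0 ≤ (μ₁ {y | (y : ℝ) ≤ x}).toReal := ENNReal.toReal_nonneg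
    have h4 : 0 ≤ (μ₂ {y | (y : ℝ) ≤ x}).toReal := ENNReal.toReal_nonneg
    rw [abs_sub_le_iff]
    constructor <;> linarith
  have hK0 : 0 ≤ K := by
    refine le_trans (abs_nonneg _) (le_ciSup hbdd ⟨a, Set.left_mem_Icc.2 hab⟩)
  obtain ⟨hint1, heq1⟩ := integral_primitive hab μ₁ hg hf
  obtain ⟨hint2, heq2⟩ := integral_primitive hab μ₂ hg hf
  rw [← hν] at hint1 hint2 heq1 heq2
  rw [heq1, heq2]
  have hgν : Integrable g ν := hg.mono_set Set.Ioc_subset_Icc_self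
  -- a.e. facts
  have hatoms : ∀ᵐ t ∂ν, μ₁ (Subtype.val ⁻¹' {t}) = 0 ∧ μ₂ (Subtype.val ⁻¹' {t}) = 0 := by
    have hvol : volume ({t : ℝ | μ₁ (Subtype.val ⁻¹' {t}) ≠ 0}
        ∪ {t : ℝ | μ₂ (Subtype.val ⁻¹' {t}) ≠ 0}) = 0 :=
      measure_union_null ((countable_atoms μ₁).measure_zero _)
        ((countable_atoms μ₂).measure_zero _)
    have hν0 : ν ({t : ℝ | μ₁ (Subtype.val ⁻¹' {t}) ≠ 0}
        ∪ {t : ℝ | μ₂ (Subtype.val ⁻¹' {t}) ≠ 0}) = 0 :=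
      le_antisymm (le_trans (Measure.restrict_le_self _) hvol.le) (by positivity)
    have := (MeasureTheory.measure_eq_zero_iff_ae_notMem (μ := ν)).1 hν0
    filter_upwards [this] with t ht
    simp only [Set.mem_union, Set.mem_setOf_eq, not_or, not_not] at ht
    exact ⟨ht.1, ht.2⟩
  set φ : ℝ → ℝ := fun t =>
    ((μ₁ (Subtype.val ⁻¹' Set.Ici t)).toReal - (μ₂ (Subtype.val ⁻¹' Set.Ici t)).toReal) * g t
    with hφ
  have hφint : Integrable φ ν := by
    refine (hint1.sub hint2).congr (Filter.Eventually.of_forall fun t => ?_)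
    simp [hφ, sub_mul]
  have hsub : (f a + ∫ t, (μ₁ (Subtype.val ⁻¹' Set.Ici t)).toReal * g t ∂ν)
      - (f a + ∫ t, (μ₂ (Subtype.val ⁻¹' Set.Ici t)).toReal * g t ∂ν) = ∫ t, φ t ∂ν := by
    rw [add_sub_add_left_eq_sub, ← integral_sub hint1 hint2]
    refine integral_congr_ae (Filter.Eventually.of_forall fun t => ?_)
    simp [hφ, sub_mul]
  rw [hsub]
  -- pointwise bound
  have hpoint : ∀ᵐ t ∂ν, |φ t| ≤ K * |g t| := by
    filter_upwards [hatoms, ae_restrict_mem measurableSet_Ioc] with t ht hmem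
    rw [hφ]
    have e1 := meas_Ici_eq μ₁ ht.1
    have e2 := meas_Ici_eq μ₂ ht.2
    simp only [e1, e2]
    have : (1 - (μ₁ (Subtype.val ⁻¹' Set.Iic t)).toReal)
        - (1 - (μ₂ (Subtype.val ⁻¹' Set.Iic t)).toReal)
        = -((μ₁ (Subtype.val ⁻¹' Set.Iic t)).toReal
          - (μ₂ (Subtype.val ⁻¹' Set.Iic t)).toReal) := by ring
    rw [this, abs_mul, abs_neg]
    refine mul_le_mul_of_nonneg_right ?_ (abs_nonneg _)
    have hxmem : t ∈ Set.Icc a b := Set.Ioc_subset_Icc_self hmem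
    exact le_ciSup hbdd (⟨t, hxmem⟩ : Set.Icc a b)
  calc ∫ t, φ t ∂ν ≤ |∫ t, φ t ∂ν| := le_abs_self _
    _ ≤ ∫ t, |φ t| ∂ν := by
        simpa [Real.norm_eq_abs] using norm_integral_le_integral_norm (μ := ν) φ
    _ ≤ ∫ t, K * |g t| ∂ν := integral_mono_ae hφint.abs (hgν.abs.const_mul K) hpoint
    _ = K * ∫ t, |g t| ∂ν := integral_const_mul K _
    _ ≤ K * 1 := by
        refine mul_le_mul_of_nonneg_left ?_ hK0
        refine le_trans ?_ hg1
        refine setIntegral_mono_set hg.abs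
          (Filter.Eventually.of_forall fun t => abs_nonneg _) ?_
        exact HasSubset.Subset.eventuallyLE Set.Ioc_subset_Icc_self
    _ = K := mul_one K

end KolmAux

/-- The Kolmogorov distance between two probability measures on a compact
interval equals the supremum of `∫ f (dμ₁ - dμ₂)` over absolutely continuous `f`
(i.e. `f x = f a + ∫_a^x g` for an integrable `g`) with `∫_I |f'| ≤ 1`. -/
theorem kolmogorov_eq_sup_test_functions {a b : ℝ} (hab : a ≤ b)
    (μ₁ μ₂ : Measure (Set.Icc a b))
    [IsProbabilityMeasure μ₁] [IsProbabilityMeasure μ₂] :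
    (⨆ x : Set.Icc a b,
        |(μ₁ {y | (y : ℝ) ≤ x}).toReal - (μ₂ {y | (y : ℝ) ≤ x}).toReal|) =
      sSup { r : ℝ | ∃ f g : ℝ → ℝ, IntegrableOn g (Set.Icc a b) ∧
        (∫ t in Set.Icc a b, |g t|) ≤ 1 ∧
        (∀ x ∈ Set.Icc a b, f x = f a + ∫ t in a..x, g t) ∧
        r = (∫ x, f (x : ℝ) ∂μ₁) - ∫ x, f (x : ℝ) ∂μ₂ } := by
  haveI : Nonempty (Set.Icc a b) := ⟨⟨a, Set.left_mem_Icc.2 hab⟩⟩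
  have hset : { r : ℝ | ∃ f g : ℝ → ℝ, IntegrableOn g (Set.Icc a b) ∧
      (∫ t in Set.Icc a b, |g t|) ≤ 1 ∧
      (∀ x ∈ Set.Icc a b, f x = f a + ∫ t in a..x, g t) ∧
      r = (∫ x, f (x : ℝ) ∂μ₁) - ∫ x, f (x : ℝ) ∂μ₂ } = kolmTestSet μ₁ μ₂ := rfl
  rw [hset]
  have hzero : (0 : ℝ) ∈ kolmTestSet μ₁ μ₂ := by
    refine ⟨fun _ => 0, fun _ => 0, (integrable_zero _ _ _).integrableOn, by simp,
      fun x hx => by simp, by simp⟩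
  have hub : ∀ r ∈ kolmTestSet μ₁ μ₂, r ≤ ⨆ x : Set.Icc a b,
      |(μ₁ {y | (y : ℝ) ≤ x}).toReal - (μ₂ {y | (y : ℝ) ≤ x}).toReal| := by
    rintro r ⟨f, g, hg, hg1, hf, rfl⟩
    exact aux_upper hab μ₁ μ₂ hg hg1 hf
  have hbddS : BddAbove (kolmTestSet μ₁ μ₂) := ⟨_, hub⟩
  refine le_antisymm ?_ (csSup_le ⟨0, hzero⟩ hub)
  refine ciSup_le fun x => ?_
  refine le_of_forall_pos_lt_add fun ε hε => ?_
  obtain ⟨r, hr, h1, h2⟩ := aux_lower hab μ₁ μ₂ x (half_pos hε)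
  have e1 : r ≤ sSup (kolmTestSet μ₁ μ₂) := le_csSup hbddS hr
  have e2 : -r ≤ sSup (kolmTestSet μ₁ μ₂) := le_csSup hbddS (kolmTestSet_neg hr)
  have habs : |(μ₁ {y | (y : ℝ) ≤ x}).toReal - (μ₂ {y | (y : ℝ) ≤ x}).toReal|
      ≤ sSup (kolmTestSet μ₁ μ₂) + ε / 2 :=
    abs_sub_le_iff.2 ⟨by linarith, by linarith⟩
  linarith
end

section
/- The 1-Wasserstein distance between probability measures μ₁ and μ₂ on a compact interval I, defined as the infimum over couplings m of ∫ |x-y| dm(x,y), equals the supremum of ∫_I f (dμ₁ - dμ₂) over all 1-Lipschitz functions f : I → ℝ (Kantorovich–Rubinstein duality). -/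
open MeasureTheory ProbabilityTheory Set
open scoped ENNReal NNReal

set_option linter.unusedSectionVars false
set_option maxHeartbeats 1000000
namespace WassersteinAux

lemma volume_between {s : Set ℝ} {m M : ℝ} (h1 : Ioo m M ⊆ s) (h2 : s ⊆ Icc m M) :
    (volume : Measure ℝ) s = ENNReal.ofReal (M - m) :=
by
  refine le_antisymm ?_ ?_
  · calc (volume : Measure ℝ) s ≤ volume (Icc m M) := measure_mono h2
      _ = ENNReal.ofReal (M - m) := Real.volume_Icc
  · calc ENNReal.ofReal (M - m) = volume (Ioo m M) := Real.volume_Ioo.symm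
      _ ≤ volume s := measure_mono h1

variable {a b : ℝ}

/-- Quantile function (clamped to `[a,b]`). -/
noncomputable def Q (ν : Measure ℝ) (a b : ℝ) (u : ℝ) : ℝ :=
  if u ≤ 1 then sInf ({x | u ≤ cdf ν x} ∩ Icc a b) else b

noncomputable def K (ν₁ ν₂ : Measure ℝ) (a b : ℝ) (u t : ℝ) : ℝ≥0∞ :=
  if (Q ν₂ a b u ≤ t ∧ t < Q ν₁ a b u) ∨ (Q ν₁ a b u ≤ t ∧ t < Q ν₂ a b u) then 1 else 0

section nu
variable (ν : Measure ℝ) [IsProbabilityMeasure ν] (hab : a ≤ b) (hs : ν (Icc a b)ᶜ = 0)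
include hab hs

lemma cdf_b : cdf ν b = 1 := by
  have h : ν (Iic b) = 1 := by
    rw [← prob_compl_eq_zero_iff measurableSet_Iic]
    refine measure_mono_null ?_ hs
    intro x hx
    simp only [compl_Iic, mem_Ioi] at hx
    simp only [mem_compl_iff, mem_Icc, not_and, not_le]
    intro _; exact hx
  rw [cdf_eq_real, measureReal_def, h]; simp

lemma cdf_lt_a {x : ℝ} (hx : x < a) : cdf ν x = 0 := by
  have h : ν (Iic x) = 0 := by
    refine measure_mono_null ?_ hs
    intro y hy
    simp only [mem_Iic] at hy
    simp only [mem_compl_iff, mem_Icc, not_and, not_le]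
    intro hay; exact absurd (hay.trans hy) (not_le.2 hx)
  rw [cdf_eq_real, measureReal_def, h]; simp

lemma Q_mem_Icc (u : ℝ) : Q ν a b u ∈ Icc a b := by
  unfold Q
  split_ifs with hu
  · have hne : ({x | u ≤ cdf ν x} ∩ Icc a b).Nonempty :=
      ⟨b, by simpa [cdf_b ν hab hs] using hu, right_mem_Icc.2 hab⟩
    have hbdd : BddBelow ({x | u ≤ cdf ν x} ∩ Icc a b) :=
      ⟨a, fun x hx => hx.2.1⟩
    constructor
    · exact le_csInf hne fun x hx => hx.2.1
    · exact csInf_le_of_le hbdd hne.choose_spec (hne.choose_spec.2.2)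
  · exact right_mem_Icc.2 hab

lemma monotone_Q : Monotone (Q ν a b) := by
  intro u v huv
  by_cases hv : v ≤ 1
  · have hu : u ≤ 1 := huv.trans hv
    unfold Q
    rw [if_pos hu, if_pos hv]
    refine csInf_le_csInf ⟨a, fun x hx => hx.2.1⟩
      ⟨b, by simpa [cdf_b ν hab hs] using hv, right_mem_Icc.2 hab⟩ ?_
    exact inter_subset_inter_left _ fun x hx => le_trans huv hx
  · have h2 : Q ν a b v = b := by unfold Q; rw [if_neg hv]
    rw [h2]
    exact (Q_mem_Icc ν hab hs u).2

lemma measurable_Q : Measurable (Q ν a b) := (monotone_Q ν hab hs).measurable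

lemma Q_le_iff {u x : ℝ} (hu0 : 0 < u) (hu1 : u ≤ 1) (hx : x ≤ b) :
    Q ν a b u ≤ x ↔ u ≤ cdf ν x := by
  unfold Q
  rw [if_pos hu1]
  set S := {y | u ≤ cdf ν y} ∩ Icc a b with hS
  have hne : S.Nonempty := ⟨b, by simpa [cdf_b ν hab hs] using hu1, right_mem_Icc.2 hab⟩
  have hbdd : BddBelow S := ⟨a, fun y hy => hy.2.1⟩
  constructor
  · intro h
    have key : ∀ y, x < y → u ≤ cdf ν y := by
      intro y hy
      obtain ⟨z, hzS, hz⟩ := (csInf_lt_iff hbdd hne).1 (lt_of_le_of_lt h hy)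
      exact hzS.1.trans ((cdf ν).mono hz.le)
    have hrc : ContinuousWithinAt (cdf ν) (Ici x) x := (cdf ν).right_continuous x
    have : Filter.Tendsto (cdf ν) (nhdsWithin x (Ioi x)) (nhds (cdf ν x)) :=
      hrc.tendsto.mono_left (nhdsWithin_mono x Ioi_subset_Ici_self)
    exact ge_of_tendsto this (Filter.eventually_of_mem self_mem_nhdsWithin fun y hy => key y hy)
  · intro h
    have hax : a ≤ x := by
      by_contra hax
      rw [cdf_lt_a ν hab hs (not_le.1 hax)] at h
      exact absurd (hu0.trans_le h) (lt_irrefl 0)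
    exact csInf_le hbdd ⟨h, hax, hx⟩

lemma map_Q : (volume.restrict (Ioo (0:ℝ) 1)).map (Q ν a b) = ν := by
  have hQm := measurable_Q ν hab hs
  have hprob : IsProbabilityMeasure (volume.restrict (Ioo (0:ℝ) 1)) :=
    ⟨by simp [Real.volume_Ioo]⟩
  have : IsProbabilityMeasure ((volume.restrict (Ioo (0:ℝ) 1)).map (Q ν a b)) :=
    Measure.isProbabilityMeasure_map hQm.aemeasurable
  refine Measure.ext_of_Iic _ _ fun x => ?_
  rw [Measure.map_apply hQm measurableSet_Iic,
    Measure.restrict_apply (hQm measurableSet_Iic)]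
  rcases lt_or_ge x a with hx | hx
  · have hempty : (Q ν a b ⁻¹' Iic x) ∩ Ioo (0:ℝ) 1 = ∅ := by
      ext u
      simp only [mem_inter_iff, mem_preimage, mem_Iic, mem_Ioo, mem_empty_iff_false, iff_false,
        not_and]
      intro h1 h2
      exact absurd ((Q_mem_Icc ν hab hs u).1.trans h1) (not_le.2 hx)
    rw [hempty, measure_empty]
    symm
    refine measure_mono_null ?_ hs
    intro y hy
    simp only [mem_Iic] at hy
    simp only [mem_compl_iff, mem_Icc, not_and, not_le]
    intro hay
    exact absurd (hay.trans hy) (not_le.2 hx)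
  rcases le_or_gt x b with hxb | hxb
  · have hset : (Q ν a b ⁻¹' Iic x) ∩ Ioo (0:ℝ) 1 = Iic (cdf ν x) ∩ Ioo 0 1 := by
      ext u
      simp only [mem_inter_iff, mem_preimage, mem_Iic, mem_Ioo]
      constructor
      · rintro ⟨h1, h2⟩
        exact ⟨(Q_le_iff ν hab hs h2.1 h2.2.le hxb).1 h1, h2⟩
      · rintro ⟨h1, h2⟩
        exact ⟨(Q_le_iff ν hab hs h2.1 h2.2.le hxb).2 h1, h2⟩
    have h0 : 0 ≤ cdf ν x := cdf_nonneg ν x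
    have h1 : cdf ν x ≤ 1 := cdf_le_one ν x
    rw [hset, volume_between (m := 0) (M := cdf ν x) ?_ ?_, ← ofReal_cdf ν x, sub_zero]
    · intro u hu
      exact ⟨hu.2.le, hu.1, hu.2.trans_le h1⟩
    · intro u hu
      exact ⟨hu.2.1.le, hu.1⟩
  · have hset : (Q ν a b ⁻¹' Iic x) ∩ Ioo (0:ℝ) 1 = Ioo (0:ℝ) 1 := by
      refine inter_eq_right.2 fun u hu => ?_
      simp only [mem_preimage, mem_Iic]
      exact (Q_mem_Icc ν hab hs u).2.trans hxb.le
    rw [hset, Real.volume_Ioo]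
    simp only [sub_zero, ENNReal.ofReal_one]
    symm
    rw [← prob_compl_eq_zero_iff measurableSet_Iic]
    refine measure_mono_null ?_ hs
    intro y hy
    simp only [compl_Iic, mem_Ioi] at hy
    simp only [mem_compl_iff, mem_Icc, not_and, not_le]
    intro _
    exact hxb.trans hy
    

end nu

lemma lint_Ico {m M : ℝ} (h1 : a ≤ m) (hmM : m ≤ M) (h2 : M ≤ b) :
    ∫⁻ t in Ioc a b, (Ico m M).indicator (fun _ => (1:ℝ≥0∞)) t = ENNReal.ofReal (M - m) := by
  rw [lintegral_indicator measurableSet_Ico, setLIntegral_one,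
    Measure.restrict_apply measurableSet_Ico]
  refine volume_between ?_ ?_
  · intro t ht
    exact ⟨⟨ht.1.le, ht.2⟩, h1.trans_lt ht.1, ht.2.le.trans h2⟩
  · intro t ht
    exact ⟨ht.1.1, ht.1.2.le⟩

section nu2
variable (ν₁ ν₂ : Measure ℝ) [IsProbabilityMeasure ν₁] [IsProbabilityMeasure ν₂]
  (hab : a ≤ b) (hs₁ : ν₁ (Icc a b)ᶜ = 0) (hs₂ : ν₂ (Icc a b)ᶜ = 0)
include hab hs₁ hs₂

lemma key_cost :
    ∫⁻ u in Ioo (0:ℝ) 1, ENNReal.ofReal |Q ν₁ a b u - Q ν₂ a b u| ∂volume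
      = ∫⁻ t in Ioc a b, ENNReal.ofReal |cdf ν₁ t - cdf ν₂ t| ∂volume := by
  have hQ₁ := measurable_Q ν₁ hab hs₁
  have hQ₂ := measurable_Q ν₂ hab hs₂
  have hKm : Measurable (Function.uncurry (K ν₁ ν₂ a b)) := by
    refine Measurable.ite ?_ measurable_const measurable_const
    exact MeasurableSet.union
      ((measurableSet_le (hQ₂.comp measurable_fst) measurable_snd).inter
        (measurableSet_lt measurable_snd (hQ₁.comp measurable_fst)))
      ((measurableSet_le (hQ₁.comp measurable_fst) measurable_snd).inter
        (measurableSet_lt measurable_snd (hQ₂.comp measurable_fst)))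
  have claimA : ∀ u : ℝ, ∫⁻ t in Ioc a b, K ν₁ ν₂ a b u t ∂volume = ENNReal.ofReal |Q ν₁ a b u - Q ν₂ a b u| := by
    intro u
    obtain ⟨ha₁, hb₁⟩ := Q_mem_Icc ν₁ hab hs₁ u
    obtain ⟨ha₂, hb₂⟩ := Q_mem_Icc ν₂ hab hs₂ u
    rcases le_total (Q ν₂ a b u) (Q ν₁ a b u) with h | h
    · have hpt : ∀ t, K ν₁ ν₂ a b u t = (Ico (Q ν₂ a b u) (Q ν₁ a b u)).indicator (fun _ => (1:ℝ≥0∞)) t := by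
        intro t
        simp only [K, Set.indicator_apply, mem_Ico]
        by_cases ht : Q ν₂ a b u ≤ t ∧ t < Q ν₁ a b u
        · rw [if_pos (Or.inl ht), if_pos ht]
        · have hn : ¬((Q ν₂ a b u ≤ t ∧ t < Q ν₁ a b u) ∨ (Q ν₁ a b u ≤ t ∧ t < Q ν₂ a b u)) := by
            rintro (h' | h')
            · exact ht h'
            · exact absurd (h'.2.trans_le (h.trans h'.1)) (lt_irrefl _)
          rw [if_neg hn, if_neg ht]
      simp only [hpt]
      rw [lint_Ico ha₂ h hb₁, abs_of_nonneg (sub_nonneg.2 h)]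
    · have hpt : ∀ t, K ν₁ ν₂ a b u t = (Ico (Q ν₁ a b u) (Q ν₂ a b u)).indicator (fun _ => (1:ℝ≥0∞)) t := by
        intro t
        simp only [K, Set.indicator_apply, mem_Ico]
        by_cases ht : Q ν₁ a b u ≤ t ∧ t < Q ν₂ a b u
        · rw [if_pos (Or.inr ht), if_pos ht]
        · have hn : ¬((Q ν₂ a b u ≤ t ∧ t < Q ν₁ a b u) ∨ (Q ν₁ a b u ≤ t ∧ t < Q ν₂ a b u)) := by
            rintro (h' | h')
            · exact absurd (h'.2.trans_le (h.trans h'.1)) (lt_irrefl _)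
            · exact ht h'
          rw [if_neg hn, if_neg ht]
      simp only [hpt]
      rw [lint_Ico ha₁ h hb₂, abs_of_nonpos (sub_nonpos.2 h), neg_sub]
  have claimB : ∀ t ∈ Ioc a b,
      ∫⁻ u in Ioo (0:ℝ) 1, K ν₁ ν₂ a b u t ∂volume = ENNReal.ofReal |cdf ν₁ t - cdf ν₂ t| := by
    intro t ht
    have hpt : ∀ u ∈ Ioo (0:ℝ) 1, K ν₁ ν₂ a b u t
        = (Ioc (cdf ν₁ t) (cdf ν₂ t) ∪ Ioc (cdf ν₂ t) (cdf ν₁ t)).indicator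
            (fun _ => (1:ℝ≥0∞)) u := by
      intro u hu
      have g₁ := Q_le_iff ν₁ hab hs₁ hu.1 hu.2.le ht.2
      have g₂ := Q_le_iff ν₂ hab hs₂ hu.1 hu.2.le ht.2
      simp only [K, Set.indicator_apply]
      have hcond : ((Q ν₂ a b u ≤ t ∧ t < Q ν₁ a b u) ∨ (Q ν₁ a b u ≤ t ∧ t < Q ν₂ a b u))
          ↔ u ∈ Ioc (cdf ν₁ t) (cdf ν₂ t) ∪ Ioc (cdf ν₂ t) (cdf ν₁ t) := by
        have e₁ : (t < Q ν₁ a b u) ↔ cdf ν₁ t < u := by rw [← not_le, g₁, not_le]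
        have e₂ : (t < Q ν₂ a b u) ↔ cdf ν₂ t < u := by rw [← not_le, g₂, not_le]
        simp only [mem_union, mem_Ioc, g₁, g₂, e₁, e₂]
        tauto
      by_cases hc : u ∈ Ioc (cdf ν₁ t) (cdf ν₂ t) ∪ Ioc (cdf ν₂ t) (cdf ν₁ t)
      · rw [if_pos (hcond.2 hc), if_pos hc]
      · rw [if_neg (fun hh => hc (hcond.1 hh)), if_neg hc]
    rw [setLIntegral_congr_fun_ae measurableSet_Ioo (Filter.Eventually.of_forall hpt)]
    rw [lintegral_indicator (MeasurableSet.union measurableSet_Ioc measurableSet_Ioc),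
      setLIntegral_one, Measure.restrict_apply (MeasurableSet.union measurableSet_Ioc measurableSet_Ioc)]
    rcases le_total (cdf ν₁ t) (cdf ν₂ t) with h | h
    · rw [Set.Ioc_eq_empty (not_lt.2 h), union_empty]
      rw [volume_between (m := cdf ν₁ t) (M := cdf ν₂ t) ?_ ?_, abs_of_nonpos (sub_nonpos.2 h), neg_sub]
      · intro u hu
        exact ⟨⟨hu.1, hu.2.le⟩, (cdf_nonneg ν₁ t).trans_lt hu.1, hu.2.trans_le (cdf_le_one ν₂ t)⟩
      · intro u hu
        exact ⟨hu.1.1.le, hu.1.2⟩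
    · rw [Set.Ioc_eq_empty (not_lt.2 h), empty_union]
      rw [volume_between (m := cdf ν₂ t) (M := cdf ν₁ t) ?_ ?_, abs_of_nonneg (sub_nonneg.2 h)]
      · intro u hu
        exact ⟨⟨hu.1, hu.2.le⟩, (cdf_nonneg ν₂ t).trans_lt hu.1, hu.2.trans_le (cdf_le_one ν₁ t)⟩
      · intro u hu
        exact ⟨hu.1.1.le, hu.1.2⟩
  calc ∫⁻ u in Ioo (0:ℝ) 1, ENNReal.ofReal |Q ν₁ a b u - Q ν₂ a b u| ∂volume
      = ∫⁻ u in Ioo (0:ℝ) 1, ∫⁻ t in Ioc a b, K ν₁ ν₂ a b u t ∂volume ∂volume := by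
        refine lintegral_congr fun u => (claimA u).symm
    _ = ∫⁻ t in Ioc a b, ∫⁻ u in Ioo (0:ℝ) 1, K ν₁ ν₂ a b u t ∂volume ∂volume :=
        lintegral_lintegral_swap hKm.aemeasurable
    _ = ∫⁻ t in Ioc a b, ENNReal.ofReal |cdf ν₁ t - cdf ν₂ t| ∂volume :=
        setLIntegral_congr_fun_ae measurableSet_Ioc (Filter.Eventually.of_forall claimB)

lemma cost_eq :
    ∫ u in Ioo (0:ℝ) 1, |Q ν₁ a b u - Q ν₂ a b u| ∂volume
      = ∫ t in Ioc a b, |cdf ν₁ t - cdf ν₂ t| ∂volume := by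
  have hQ₁ := measurable_Q ν₁ hab hs₁
  have hQ₂ := measurable_Q ν₂ hab hs₂
  have hm₁ : AEStronglyMeasurable (fun u => |Q ν₁ a b u - Q ν₂ a b u|)
      (volume.restrict (Ioo (0:ℝ) 1)) := ((hQ₁.sub hQ₂).abs).aestronglyMeasurable
  have hm₂ : AEStronglyMeasurable (fun t => |cdf ν₁ t - cdf ν₂ t|)
      (volume.restrict (Ioc a b)) :=
    (((cdf ν₁).mono.measurable.sub (cdf ν₂).mono.measurable).abs).aestronglyMeasurable
  rw [integral_eq_lintegral_of_nonneg_ae (Filter.Eventually.of_forall fun u => abs_nonneg _) hm₁,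
    integral_eq_lintegral_of_nonneg_ae (Filter.Eventually.of_forall fun t => abs_nonneg _) hm₂,
    key_cost ν₁ ν₂ hab hs₁ hs₂]

end nu2



lemma int_bdd {g : ℝ → ℝ} {s : Set ℝ} (hg : AEStronglyMeasurable g (volume.restrict s))
    (hb : ∀ t, ‖g t‖ ≤ 1) (hs : volume s ≠ ⊤) : IntegrableOn g s := by
  haveI : IsFiniteMeasure (volume.restrict s) :=
    ⟨by rwa [Measure.restrict_apply_univ, lt_top_iff_ne_top]⟩
  exact (integrable_const (1:ℝ)).mono' hg (Filter.Eventually.of_forall hb)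

lemma abs_setIntegral_Ioc_le {g : ℝ → ℝ} (hg : Measurable g) (hb : ∀ t, ‖g t‖ ≤ 1)
    {c d : ℝ} (hcd : c ≤ d) : |∫ t in Ioc c d, g t| ≤ d - c := by
  have hfin : volume (Ioc c d) ≠ ⊤ := (measure_Ioc_lt_top).ne
  rw [← Real.norm_eq_abs]
  calc ‖∫ t in Ioc c d, g t‖ ≤ ∫ t in Ioc c d, ‖g t‖ := norm_integral_le_integral_norm _
    _ ≤ ∫ _t in Ioc c d, (1:ℝ) := by
        refine integral_mono ((int_bdd hg.aestronglyMeasurable hb hfin).norm) ?_ ?_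
        · exact int_bdd aestronglyMeasurable_const (fun t => by simp) hfin
        · exact fun t => hb t
    _ = (volume (Ioc c d)).toReal • (1:ℝ) := setIntegral_const 1
    _ = d - c := by
        rw [Real.volume_Ioc, smul_eq_mul, mul_one, ENNReal.toReal_ofReal (sub_nonneg.2 hcd)]

lemma lipschitz_primitive {g : ℝ → ℝ} (hg : Measurable g) (hb : ∀ t, ‖g t‖ ≤ 1) :
    LipschitzWith 1 (fun x => ∫ t in Ioc a x, g t) := by
  have key : ∀ x y : ℝ, a ≤ y → y ≤ x →
      (∫ t in Ioc a x, g t) - (∫ t in Ioc a y, g t) = ∫ t in Ioc y x, g t := by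
    intro x y hay hyx
    have hfin : ∀ u v : ℝ, volume (Ioc u v) ≠ ⊤ := fun u v => measure_Ioc_lt_top.ne
    rw [← Ioc_union_Ioc_eq_Ioc hay hyx,
      setIntegral_union (Ioc_disjoint_Ioc_of_le le_rfl) measurableSet_Ioc
        (int_bdd hg.aestronglyMeasurable hb (hfin a y))
        (int_bdd hg.aestronglyMeasurable hb (hfin y x))]
    ring
  have hIoc : ∀ z : ℝ, Ioc a z = Ioc a (max a z) := by
    intro z
    rcases le_total a z with h | h
    · rw [max_eq_right h]
    · rw [max_eq_left h, Ioc_eq_empty (not_lt.2 h), Ioc_self]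
  have main : ∀ x y : ℝ, y ≤ x →
      |(∫ t in Ioc a x, g t) - (∫ t in Ioc a y, g t)| ≤ x - y := by
    intro x y hyx
    have h1 : max a y ≤ max a x := max_le_max le_rfl hyx
    rw [hIoc x, hIoc y, key (max a x) (max a y) (le_max_left _ _) h1]
    refine (abs_setIntegral_Ioc_le hg hb h1).trans ?_
    have h2 : max a x ≤ max a y + (x - y) := by
      refine max_le (le_add_of_le_of_nonneg (le_max_left a y) (sub_nonneg.2 hyx)) ?_
      have := le_max_right a y
      linarith
    linarith
  refine LipschitzWith.of_dist_le_mul fun x y => ?_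
  rw [NNReal.coe_one, one_mul, Real.dist_eq, Real.dist_eq]
  rcases le_total y x with h | h
  · rw [abs_of_nonneg (sub_nonneg.2 h)]
    exact main x y h
  · rw [abs_sub_comm, abs_sub_comm x y, abs_of_nonneg (sub_nonneg.2 h)]
    exact main y x h

lemma integral_primitive {g : ℝ → ℝ} (hg : Measurable g) (hb : ∀ t, ‖g t‖ ≤ 1)
    (ν : Measure ℝ) [IsProbabilityMeasure ν] (hab : a ≤ b) (hs : ν (Icc a b)ᶜ = 0) :
    ∫ x, (∫ t in Ioc a x, g t) ∂ν = ∫ t in Ioc a b, g t * (ν (Ici t)).toReal := by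
  haveI : IsFiniteMeasure (volume.restrict (Ioc a b)) :=
    ⟨by rw [Measure.restrict_apply_univ]; exact measure_Ioc_lt_top⟩
  have hae : ∀ᵐ x ∂ν, x ∈ Icc a b := by
    rw [ae_iff]
    exact hs
  have step1 : ∫ x, (∫ t in Ioc a x, g t) ∂ν
      = ∫ x, (∫ t in Ioc a b, (Ioc a x).indicator g t) ∂ν := by
    refine integral_congr_ae (hae.mono fun x hx => ?_)
    dsimp only
    rw [setIntegral_indicator measurableSet_Ioc,
      inter_eq_self_of_subset_right (Ioc_subset_Ioc le_rfl hx.2)]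
  have hmeas : Measurable (Function.uncurry fun x t => (Ioc a x).indicator g t) := by
    have heq : (Function.uncurry fun x t => (Ioc a x).indicator g t)
        = {p : ℝ × ℝ | a < p.2 ∧ p.2 ≤ p.1}.indicator (fun p => g p.2) := by
      ext ⟨x, t⟩
      simp only [Function.uncurry, Set.indicator_apply, mem_Ioc, mem_setOf_eq]
    rw [heq]
    exact (hg.comp measurable_snd).indicator
      ((measurableSet_lt measurable_const measurable_snd).inter
        (measurableSet_le measurable_snd measurable_fst))
  have hH : Integrable (Function.uncurry fun x t => (Ioc a x).indicator g t)
      (ν.prod (volume.restrict (Ioc a b))) := by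
    refine (integrable_const (1:ℝ)).mono' hmeas.aestronglyMeasurable
      (Filter.Eventually.of_forall fun p => ?_)
    rcases p with ⟨x, t⟩
    simp only [Function.uncurry, Set.indicator_apply]
    split_ifs
    · exact hb t
    · simp
  rw [step1, integral_integral_swap hH]
  refine setIntegral_congr_fun measurableSet_Ioc fun t ht => ?_
  have heq2 : (fun x => (Ioc a x).indicator g t) = (Ici t).indicator (fun _ => g t) := by
    ext x
    simp only [Set.indicator_apply, mem_Ioc, mem_Ici]
    by_cases hx : t ≤ x
    · rw [if_pos ⟨ht.1, hx⟩, if_pos hx]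
    · rw [if_neg (fun hc => hx hc.2), if_neg hx]
  rw [heq2, integral_indicator measurableSet_Ici, setIntegral_const, smul_eq_mul, mul_comm, measureReal_def]

noncomputable def gd (ν₁ ν₂ : Measure ℝ) (t : ℝ) : ℝ := if cdf ν₁ t ≤ cdf ν₂ t then 1 else -1

lemma gd_meas (ν₁ ν₂ : Measure ℝ) : Measurable (gd ν₁ ν₂) :=
  Measurable.ite (measurableSet_le (cdf ν₁).mono.measurable (cdf ν₂).mono.measurable)
    measurable_const measurable_const

lemma gd_norm (ν₁ ν₂ : Measure ℝ) : ∀ t, ‖gd ν₁ ν₂ t‖ ≤ 1 := by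
  intro t
  rw [Real.norm_eq_abs]
  unfold gd
  split_ifs <;> simp

lemma ae_singleton_zero (ν : Measure ℝ) [IsProbabilityMeasure ν] :
    ∀ᵐ t ∂(volume : Measure ℝ), ν {t} = 0 := by
  have hcount : Set.Countable {t : ℝ | 0 < ν {x | x = t}} :=
    Measure.countable_meas_level_set_pos measurable_id
  have h2 : {t : ℝ | ¬ ν {t} = 0} ⊆ {t : ℝ | 0 < ν {x | x = t}} := by
    intro t ht
    simp only [mem_setOf_eq, Set.setOf_eq_eq_singleton]
    exact pos_iff_ne_zero.2 ht
  rw [ae_iff]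
  exact measure_mono_null h2 (hcount.measure_zero _)

lemma Ici_toReal (ν : Measure ℝ) [IsProbabilityMeasure ν] {t : ℝ} (h0 : ν {t} = 0) :
    (ν (Ici t)).toReal = 1 - cdf ν t := by
  have hset : ({t} : Set ℝ) ∪ Ioi t = Ici t := by
    ext x
    simp only [mem_union, mem_singleton_iff, mem_Ioi, mem_Ici]
    constructor
    · rintro (rfl | h)
      · exact le_rfl
      · exact h.le
    · intro h
      rcases eq_or_lt_of_le h with h' | h'
      · exact Or.inl h'.symm
      · exact Or.inr h'
  have h1 : ν (Ici t) = ν (Ioi t) := by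
    refine le_antisymm ?_ (measure_mono Ioi_subset_Ici_self)
    calc ν (Ici t) = ν ({t} ∪ Ioi t) := by rw [hset]
      _ ≤ ν {t} + ν (Ioi t) := measure_union_le _ _
      _ = ν (Ioi t) := by rw [h0, zero_add]
  rw [h1, ← compl_Iic, prob_compl_eq_one_sub measurableSet_Iic,
    ENNReal.toReal_sub_of_le prob_le_one ENNReal.one_ne_top, ENNReal.toReal_one,
    cdf_eq_real, measureReal_def]

lemma antitone_Ici_toReal (ν : Measure ℝ) [IsProbabilityMeasure ν] :
    Antitone (fun t : ℝ => (ν (Ici t)).toReal) := by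
  intro x y hxy
  exact ENNReal.toReal_mono (measure_ne_top ν _) (measure_mono (Ici_subset_Ici.2 hxy))


lemma dual_value (ν₁ ν₂ : Measure ℝ) [IsProbabilityMeasure ν₁] [IsProbabilityMeasure ν₂]
    (hab : a ≤ b) (hs₁ : ν₁ (Icc a b)ᶜ = 0) (hs₂ : ν₂ (Icc a b)ᶜ = 0) :
    (∫ x, (∫ t in Ioc a x, gd ν₁ ν₂ t) ∂ν₁) - (∫ x, (∫ t in Ioc a x, gd ν₁ ν₂ t) ∂ν₂)
      = ∫ t in Ioc a b, |cdf ν₁ t - cdf ν₂ t| := by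
  have hfin : volume (Ioc a b) ≠ ⊤ := measure_Ioc_lt_top.ne
  have hi : ∀ (ν : Measure ℝ), IsProbabilityMeasure ν →
      IntegrableOn (fun t => gd ν₁ ν₂ t * (ν (Ici t)).toReal) (Ioc a b) := by
    intro ν hν
    refine int_bdd (((gd_meas ν₁ ν₂).mul
      (antitone_Ici_toReal ν).measurable).aestronglyMeasurable) (fun t => ?_) hfin
    rw [Real.norm_eq_abs, abs_mul]
    have h1 : |gd ν₁ ν₂ t| ≤ 1 := by rw [← Real.norm_eq_abs]; exact gd_norm ν₁ ν₂ t
    have h2 : |(ν (Ici t)).toReal| ≤ 1 := by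
      rw [abs_of_nonneg ENNReal.toReal_nonneg]
      exact ENNReal.toReal_le_of_le_ofReal zero_le_one (by simpa using prob_le_one)
    calc |gd ν₁ ν₂ t| * |(ν (Ici t)).toReal| ≤ 1 * 1 :=
      mul_le_mul h1 h2 (abs_nonneg _) zero_le_one
    _ = 1 := one_mul 1
  rw [integral_primitive (gd_meas ν₁ ν₂) (gd_norm ν₁ ν₂) ν₁ hab hs₁,
    integral_primitive (gd_meas ν₁ ν₂) (gd_norm ν₁ ν₂) ν₂ hab hs₂,
    ← integral_sub (hi ν₁ ‹_›) (hi ν₂ ‹_›)]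
  refine integral_congr_ae ?_
  have hae := (ae_singleton_zero ν₁).and (ae_singleton_zero ν₂)
  refine (ae_restrict_of_ae hae).mono fun t ht => ?_
  dsimp only
  rw [Ici_toReal ν₁ ht.1, Ici_toReal ν₂ ht.2]
  unfold gd
  split_ifs with h
  · rw [abs_of_nonpos (sub_nonpos.2 h)]
    ring
  · rw [abs_of_nonneg (sub_nonneg.2 (not_le.1 h).le)]
    ring

end WassersteinAux

open WassersteinAux in
/-- Kantorovich–Rubinstein duality: the 1-Wasserstein distance between
probability measures on a compact interval, defined as the infimum of `∫ |x-y| dm`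
over couplings `m`, equals the supremum of `∫ f (dμ₁ - dμ₂)` over 1-Lipschitz `f`. -/
theorem wasserstein_duality {a b : ℝ} (hab : a ≤ b)
    (μ₁ μ₂ : Measure (Set.Icc a b))
    [IsProbabilityMeasure μ₁] [IsProbabilityMeasure μ₂] :
    sInf { r : ℝ | ∃ m : Measure (Set.Icc a b × Set.Icc a b),
        IsProbabilityMeasure m ∧ m.map Prod.fst = μ₁ ∧ m.map Prod.snd = μ₂ ∧
        r = ∫ p, |(p.1 : ℝ) - (p.2 : ℝ)| ∂m } =
      sSup { r : ℝ | ∃ f : Set.Icc a b → ℝ, LipschitzWith 1 f ∧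
        r = (∫ x, f x ∂μ₁) - ∫ x, f x ∂μ₂ } := by
  classical
  set T := { r : ℝ | ∃ m : Measure (Set.Icc a b × Set.Icc a b),
      IsProbabilityMeasure m ∧ m.map Prod.fst = μ₁ ∧ m.map Prod.snd = μ₂ ∧
      r = ∫ p, |(p.1 : ℝ) - (p.2 : ℝ)| ∂m } with hT
  set S := { r : ℝ | ∃ f : Set.Icc a b → ℝ, LipschitzWith 1 f ∧
      r = (∫ x, f x ∂μ₁) - ∫ x, f x ∂μ₂ } with hS
  have hvm : Measurable (Subtype.val : Set.Icc a b → ℝ) := measurable_subtype_coe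
  have hemb : MeasurableEmbedding (Subtype.val : Set.Icc a b → ℝ) :=
    MeasurableEmbedding.subtype_coe measurableSet_Icc
  set ν₁ : Measure ℝ := μ₁.map Subtype.val with hν₁
  set ν₂ : Measure ℝ := μ₂.map Subtype.val with hν₂
  haveI : IsProbabilityMeasure ν₁ := Measure.isProbabilityMeasure_map hvm.aemeasurable
  haveI : IsProbabilityMeasure ν₂ := Measure.isProbabilityMeasure_map hvm.aemeasurable
  have hsupp : ∀ (μ : Measure (Set.Icc a b)),
      (μ.map Subtype.val) (Set.Icc a b)ᶜ = 0 := by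
    intro μ
    rw [Measure.map_apply hvm measurableSet_Icc.compl]
    have : (Subtype.val : Set.Icc a b → ℝ) ⁻¹' (Set.Icc a b)ᶜ = ∅ := by
      ext x
      simp only [Set.mem_preimage, Set.mem_compl_iff, Set.mem_empty_iff_false, iff_false,
        not_not]
      exact x.2
    rw [this, measure_empty]
  have hs₁ : ν₁ (Set.Icc a b)ᶜ = 0 := hsupp μ₁
  have hs₂ : ν₂ (Set.Icc a b)ᶜ = 0 := hsupp μ₂
  set x₀ : Set.Icc a b := ⟨a, Set.left_mem_Icc.2 hab⟩ with hx₀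
  -- bound for Lipschitz functions
  have hbound : ∀ (f : Set.Icc a b → ℝ), LipschitzWith 1 f → ∀ x : Set.Icc a b,
      ‖f x‖ ≤ ‖f x₀‖ + (b - a) := by
    intro f hf x
    have h1 : dist (f x) (f x₀) ≤ dist x x₀ := by
      simpa using hf.dist_le_mul x x₀
    have h2 : dist x x₀ ≤ b - a := by
      rw [Subtype.dist_eq, Real.dist_eq]
      have hx1 := x.2.1
      have hx2 := x.2.2
      rw [abs_le]
      constructor <;> [linarith; linarith]
    have h3 : ‖f x‖ - ‖f x₀‖ ≤ dist (f x) (f x₀) := by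
      rw [Real.dist_eq, Real.norm_eq_abs, Real.norm_eq_abs]
      exact abs_sub_abs_le_abs_sub _ _
    linarith
  -- weak duality
  have weak : ∀ s ∈ S, ∀ r ∈ T, s ≤ r := by
    rintro s ⟨f, hf, rfl⟩ r ⟨m, hm, hm1, hm2, rfl⟩
    haveI := hm
    have hint1 : Integrable (fun p : Set.Icc a b × Set.Icc a b => f p.1) m :=
      (integrable_const (‖f x₀‖ + (b - a))).mono'
        (hf.continuous.comp continuous_fst).aestronglyMeasurable
        (Filter.Eventually.of_forall fun p => hbound f hf p.1)
    have hint2 : Integrable (fun p : Set.Icc a b × Set.Icc a b => f p.2) m :=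
      (integrable_const (‖f x₀‖ + (b - a))).mono'
        (hf.continuous.comp continuous_snd).aestronglyMeasurable
        (Filter.Eventually.of_forall fun p => hbound f hf p.2)
    have hint4 : Integrable (fun p : Set.Icc a b × Set.Icc a b => |(p.1:ℝ) - (p.2:ℝ)|) m := by
      refine (integrable_const (b - a)).mono'
        (((continuous_subtype_val.comp continuous_fst).sub
          (continuous_subtype_val.comp continuous_snd)).abs).aestronglyMeasurable
        (Filter.Eventually.of_forall fun p => ?_)
      rw [Real.norm_eq_abs, abs_abs, abs_le]
      have h1 := p.1.2.1; have h2 := p.1.2.2; have h3 := p.2.2.1; have h4 := p.2.2.2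
      constructor <;> [linarith; linarith]
    rw [← hm1, ← hm2, integral_map measurable_fst.aemeasurable
        hf.continuous.aestronglyMeasurable,
      integral_map measurable_snd.aemeasurable hf.continuous.aestronglyMeasurable,
      ← integral_sub hint1 hint2]
    refine integral_mono (hint1.sub hint2) hint4 fun p => ?_
    have h1 : dist (f p.1) (f p.2) ≤ dist p.1 p.2 := by simpa using hf.dist_le_mul p.1 p.2
    rw [Subtype.dist_eq, Real.dist_eq, Real.dist_eq] at h1
    calc f p.1 - f p.2 ≤ |f p.1 - f p.2| := le_abs_self _
      _ ≤ |(p.1:ℝ) - (p.2:ℝ)| := h1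
  -- product coupling : T nonempty
  have hT0 : (∫ p, |(p.1:ℝ) - (p.2:ℝ)| ∂(μ₁.prod μ₂)) ∈ T := by
    refine ⟨μ₁.prod μ₂, inferInstance, ?_, ?_, rfl⟩
    · rw [Measure.map_fst_prod]
      simp
    · rw [Measure.map_snd_prod]
      simp
  have hTne : T.Nonempty := ⟨_, hT0⟩
  have hTbdd : BddBelow T := by
    refine ⟨0, fun r hr => ?_⟩
    obtain ⟨m, hm, _, _, rfl⟩ := hr
    exact integral_nonneg fun p => abs_nonneg _
  have hS0 : (0:ℝ) ∈ S := ⟨fun _ => 0, LipschitzWith.const' 0, by simp⟩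
  have hSbdd : BddAbove S := ⟨_, fun s hs => weak s hs _ hT0⟩
  -- the common value
  set c : ℝ := ∫ t in Set.Ioc a b, |cdf ν₁ t - cdf ν₂ t| with hc
  -- c ∈ T : quantile coupling
  have hcT : c ∈ T := by
    set U := (volume : Measure ℝ).restrict (Set.Ioo (0:ℝ) 1) with hU
    haveI : IsProbabilityMeasure U := ⟨by simp [hU, Real.volume_Ioo]⟩
    set e₁ : ℝ → Set.Icc a b := fun u => Set.projIcc a b hab (Q ν₁ a b u) with he₁def
    set e₂ : ℝ → Set.Icc a b := fun u => Set.projIcc a b hab (Q ν₂ a b u) with he₂def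
    have he₁ : Measurable e₁ := continuous_projIcc.measurable.comp (measurable_Q ν₁ hab hs₁)
    have he₂ : Measurable e₂ := continuous_projIcc.measurable.comp (measurable_Q ν₂ hab hs₂)
    have hve₁ : ∀ u, (e₁ u : ℝ) = Q ν₁ a b u := fun u => by
      rw [he₁def]; simp [Set.projIcc_of_mem hab (Q_mem_Icc ν₁ hab hs₁ u)]
    have hve₂ : ∀ u, (e₂ u : ℝ) = Q ν₂ a b u := fun u => by
      rw [he₂def]; simp [Set.projIcc_of_mem hab (Q_mem_Icc ν₂ hab hs₂ u)]
    have hmap : ∀ (ν : Measure ℝ) (inst : IsProbabilityMeasure ν) (hs : ν (Set.Icc a b)ᶜ = 0)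
        (e : ℝ → Set.Icc a b) (he : Measurable e) (hve : ∀ u, (e u : ℝ) = Q ν a b u)
        (μ : Measure (Set.Icc a b)) (hμν : μ.map Subtype.val = ν),
        U.map e = μ := by
      intro ν inst hs e he hve μ hμν
      have h1 : (U.map e).map Subtype.val = ν := by
        rw [Measure.map_map hvm he]
        have : (Subtype.val ∘ e) = Q ν a b := funext hve
        rw [this, map_Q ν hab hs]
      calc U.map e = ((U.map e).map Subtype.val).comap Subtype.val := (hemb.comap_map _).symm
        _ = (μ.map Subtype.val).comap Subtype.val := by rw [h1, hμν]
        _ = μ := hemb.comap_map μ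
    have hmap₁ : U.map e₁ = μ₁ := hmap ν₁ ‹_› hs₁ e₁ he₁ hve₁ μ₁ rfl
    have hmap₂ : U.map e₂ = μ₂ := hmap ν₂ ‹_› hs₂ e₂ he₂ hve₂ μ₂ rfl
    have hpair : Measurable (fun u => (e₁ u, e₂ u)) := he₁.prodMk he₂
    refine ⟨U.map (fun u => (e₁ u, e₂ u)), Measure.isProbabilityMeasure_map hpair.aemeasurable, ?_, ?_, ?_⟩
    · rw [Measure.map_map measurable_fst hpair]
      exact hmap₁
    · rw [Measure.map_map measurable_snd hpair]
      exact hmap₂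
    · have hcont : Continuous (fun p : Set.Icc a b × Set.Icc a b => |(p.1:ℝ) - (p.2:ℝ)|) :=
        ((continuous_subtype_val.comp continuous_fst).sub
          (continuous_subtype_val.comp continuous_snd)).abs
      rw [integral_map hpair.aemeasurable hcont.aestronglyMeasurable]
      have : ∀ u, |((e₁ u : ℝ)) - ((e₂ u : ℝ))| = |Q ν₁ a b u - Q ν₂ a b u| := by
        intro u
        rw [hve₁ u, hve₂ u]
      simp only [this]
      rw [hc]
      exact (cost_eq ν₁ ν₂ hab hs₁ hs₂).symm
  -- c ∈ S : dual potential
  have hcS : c ∈ S := by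
    set f : Set.Icc a b → ℝ := fun x => ∫ t in Set.Ioc a (x:ℝ), gd ν₁ ν₂ t with hf
    have hlipR : LipschitzWith 1 (fun x : ℝ => ∫ t in Set.Ioc a x, gd ν₁ ν₂ t) :=
      lipschitz_primitive (gd_meas ν₁ ν₂) (gd_norm ν₁ ν₂)
    have hflip : LipschitzWith 1 f := by
      have := hlipR.comp (LipschitzWith.subtype_val (Set.Icc a b))
      rw [one_mul] at this
      exact this
    refine ⟨f, hflip, ?_⟩
    have hint : ∀ (μ : Measure (Set.Icc a b)),
        ∫ x, f x ∂μ = ∫ y, (∫ t in Set.Ioc a y, gd ν₁ ν₂ t) ∂(μ.map Subtype.val) := by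
      intro μ
      rw [integral_map hvm.aemeasurable hlipR.continuous.aestronglyMeasurable]
    rw [hint μ₁, hint μ₂, ← hν₁, ← hν₂, hc]
    exact (dual_value ν₁ ν₂ hab hs₁ hs₂).symm
  exact le_antisymm ((csInf_le hTbdd hcT).trans (le_csSup hSbdd hcS))
    (le_csInf hTne fun r hr => csSup_le ⟨0, hS0⟩ fun s hs => weak s hs r hr)
end

section
/- Let D = [[0,1],[1,0]] ∈ M₂(ℝ) and let ρ₀ = [[p₀,q₀],[q₀,1-p₀]] and ρ₁ = [[p₁,q₁],[q₁,1-p₁]] be two real symmetric density matrices with q₀ ≠ q₁. Then the Connes spectral distance d_D(ρ₀,ρ₁) = sup { |tr(ρ₀ f) - tr(ρ₁ f)| : f ∈ M₂(ℝ), ‖[D,f]‖ ≤ 1 } is infinite. -/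
/-- The operator (spectral) norm of a real 2×2 matrix, as the supremum of
`‖A v‖` over Euclidean unit vectors `v`. -/
noncomputable def opNorm2 (A : Matrix (Fin 2) (Fin 2) ℝ) : ℝ :=
  sSup { r : ℝ | ∃ v : EuclideanSpace ℝ (Fin 2), ‖v‖ ≤ 1 ∧
    r = ‖(Matrix.toEuclideanLin A) v‖ }

lemma opNorm2_zero : opNorm2 (0 : Matrix (Fin 2) (Fin 2) ℝ) = 0 := by
  unfold opNorm2
  have : { r : ℝ | ∃ v : EuclideanSpace ℝ (Fin 2), ‖v‖ ≤ 1 ∧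
      r = ‖(Matrix.toEuclideanLin (0 : Matrix (Fin 2) (Fin 2) ℝ)) v‖ } = {0} := by
    ext r
    simp only [Set.mem_setOf_eq, Set.mem_singleton_iff]
    constructor
    · rintro ⟨v, -, rfl⟩; simp
    · rintro rfl; exact ⟨0, by simp, by simp⟩
  rw [this, csSup_singleton]

/-- with `D = [[0,1],[1,0]]` and density matrices
`ρ₀ = [[p₀,q₀],[q₀,1-p₀]]`, `ρ₁ = [[p₁,q₁],[q₁,1-p₁]]` with `q₀ ≠ q₁`, the Connes
spectral distance `sup { |tr(ρ₀ f) - tr(ρ₁ f)| : ‖[D,f]‖ ≤ 1 }` is infinite. -/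
theorem connes_distance_unbounded (p₀ p₁ q₀ q₁ : ℝ) (hq : q₀ ≠ q₁)
    (hρ₀ : (Matrix.of ![![p₀, q₀], ![q₀, 1 - p₀]]).PosSemidef)
    (hρ₁ : (Matrix.of ![![p₁, q₁], ![q₁, 1 - p₁]]).PosSemidef) :
    ¬ BddAbove { r : ℝ | ∃ f : Matrix (Fin 2) (Fin 2) ℝ,
      opNorm2 (Matrix.of ![![(0:ℝ), 1], ![1, 0]] * f
        - f * Matrix.of ![![(0:ℝ), 1], ![1, 0]]) ≤ 1 ∧
      r = |(Matrix.of ![![p₀, q₀], ![q₀, 1 - p₀]] * f).trace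
            - (Matrix.of ![![p₁, q₁], ![q₁, 1 - p₁]] * f).trace| } := by
  rintro ⟨b, hb⟩
  have hqq : 0 < |q₀ - q₁| := abs_pos.mpr (sub_ne_zero.mpr hq)
  set t : ℝ := (|b| + 1) / (2 * |q₀ - q₁|) with ht
  set D : Matrix (Fin 2) (Fin 2) ℝ := Matrix.of ![![(0:ℝ), 1], ![1, 0]] with hD
  have hmem : (|b| + 1 : ℝ) ∈ { r : ℝ | ∃ f : Matrix (Fin 2) (Fin 2) ℝ,
      opNorm2 (Matrix.of ![![(0:ℝ), 1], ![1, 0]] * f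
        - f * Matrix.of ![![(0:ℝ), 1], ![1, 0]]) ≤ 1 ∧
      r = |(Matrix.of ![![p₀, q₀], ![q₀, 1 - p₀]] * f).trace
            - (Matrix.of ![![p₁, q₁], ![q₁, 1 - p₁]] * f).trace| } := by
    refine ⟨t • D, ?_, ?_⟩
    · have hz : Matrix.of ![![(0:ℝ), 1], ![1, 0]] * (t • D)
          - (t • D) * Matrix.of ![![(0:ℝ), 1], ![1, 0]] = 0 := by
        rw [Matrix.mul_smul, Matrix.smul_mul, hD, sub_self]
      rw [hz, opNorm2_zero]; norm_num
    · have h0 : (Matrix.of ![![p₀, q₀], ![q₀, 1 - p₀]] * (t • D)).trace = t * (2 * q₀) := by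
        simp [Matrix.trace, Matrix.mul_apply, Fin.sum_univ_two, hD]
        ring
      have h1 : (Matrix.of ![![p₁, q₁], ![q₁, 1 - p₁]] * (t • D)).trace = t * (2 * q₁) := by
        simp [Matrix.trace, Matrix.mul_apply, Fin.sum_univ_two, hD]
        ring
      rw [h0, h1]
      have : t * (2 * q₀) - t * (2 * q₁) = t * (2 * (q₀ - q₁)) := by ring
      rw [this, abs_mul, abs_mul]
      have htpos : 0 < t := by positivity
      rw [abs_of_pos htpos, ht, abs_two]
      field_simp
  have := hb hmem
  have : (b : ℝ) < |b| + 1 := lt_of_le_of_lt (le_abs_self b) (by linarith)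
  linarith
end

section
/- For κ > 0, the functional d_{W₁,κ}(μ₁,μ₂) := sup_f { ∫_I tr(f (dμ₁ - dμ₂)) : ‖f‖_Lip ≤ 1, ‖f(x)‖ ≤ κ for all x }, where f ranges over continuous Hermitian-matrix-valued functions, defines a metric on positive-semidefinite-matrix-valued finite Borel measures on a compact interval I. -/
open MeasureTheory
open scoped ComplexOrder

noncomputable section

/-- The operator (spectral) norm of an `ℓ×ℓ` complex matrix. -/
def matOpNorm {l : ℕ} (A : Matrix (Fin l) (Fin l) ℂ) : ℝ :=
  sSup { r : ℝ | ∃ v : EuclideanSpace ℂ (Fin l), ‖v‖ ≤ 1 ∧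
    r = ‖(Matrix.toEuclideanLin A) v‖ }

variable {α : Type*} [MeasurableSpace α]

/-- Integral of a real function against a signed measure. -/
def sInt (ν : SignedMeasure α) (g : α → ℝ) : ℝ :=
  (∫ x, g x ∂ν.toJordanDecomposition.posPart)
    - ∫ x, g x ∂ν.toJordanDecomposition.negPart

/-- Integral of a complex function against a complex measure. -/
def cInt (ν : ComplexMeasure α) (g : α → ℂ) : ℂ :=
  ((sInt (ComplexMeasure.re ν) fun x => (g x).re)
      - (sInt (ComplexMeasure.im ν) fun x => (g x).im) : ℝ)
    + Complex.I * ((sInt (ComplexMeasure.re ν) fun x => (g x).im)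
      + (sInt (ComplexMeasure.im ν) fun x => (g x).re) : ℝ)

/-- The `(i,j)` entry of a matrix-valued measure, as a complex measure. -/
def entryMeasure {l : ℕ} (μ : VectorMeasure α (Matrix (Fin l) (Fin l) ℂ))
    (i j : Fin l) : ComplexMeasure α :=
  μ.mapRange (AddMonoidHom.mk' (fun A => A i j) fun _ _ => rfl)
    ((continuous_apply j).comp (continuous_apply i))

/-- `∫ tr(f dμ)` for a matrix-valued function `f` and matrix-valued measure `μ`. -/
def trInt {l : ℕ} (μ : VectorMeasure α (Matrix (Fin l) (Fin l) ℂ))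
    (f : α → Matrix (Fin l) (Fin l) ℂ) : ℂ :=
  ∑ i : Fin l, ∑ j : Fin l, cInt (entryMeasure μ j i) fun x => f x i j

/-- The matricial distance
`d_{W₁,κ}(μ₁,μ₂) = sup_f { ∫ tr(f(dμ₁-dμ₂)) : ‖f‖_Lip ≤ 1, ‖f(x)‖ ≤ κ }`, the
supremum taken over continuous Hermitian-matrix-valued functions. -/
def dWkMat {a b : ℝ} {l : ℕ} (κ : ℝ)
    (μ₁ μ₂ : VectorMeasure (Set.Icc a b) (Matrix (Fin l) (Fin l) ℂ)) : ℝ :=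
  sSup { r : ℝ | ∃ f : Set.Icc a b → Matrix (Fin l) (Fin l) ℂ,
    Continuous f ∧ (∀ x, (f x).IsHermitian) ∧
    (∀ x y, matOpNorm (f x - f y) ≤ dist x y) ∧
    (∀ x, matOpNorm (f x) ≤ κ) ∧
    r = (trInt μ₁ f - trInt μ₂ f).re }

lemma matOpNorm_eq {l : ℕ} (A : Matrix (Fin l) (Fin l) ℂ) :
    matOpNorm A = ‖(LinearMap.toContinuousLinearMap (Matrix.toEuclideanLin A))‖ := by
  rw [← ContinuousLinearMap.sSup_unitClosedBall_eq_norm]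
  unfold matOpNorm
  congr 1
  ext r
  constructor
  · rintro ⟨v, hv, rfl⟩
    exact ⟨v, by simpa [Metric.mem_closedBall] using hv, rfl⟩
  · rintro ⟨v, hv, rfl⟩
    exact ⟨v, by simpa [Metric.mem_closedBall] using hv, rfl⟩

lemma matOpNorm_nonneg {l : ℕ} (A : Matrix (Fin l) (Fin l) ℂ) : 0 ≤ matOpNorm A := by
  rw [matOpNorm_eq]; exact norm_nonneg _

lemma matOpNorm_zero {l : ℕ} : matOpNorm (0 : Matrix (Fin l) (Fin l) ℂ) = 0 := by
  rw [matOpNorm_eq]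
  have h : LinearMap.toContinuousLinearMap (Matrix.toEuclideanLin
      (0 : Matrix (Fin l) (Fin l) ℂ)) = 0 := by
    ext v
    simp
  rw [h, norm_zero]

lemma matOpNorm_neg {l : ℕ} (A : Matrix (Fin l) (Fin l) ℂ) : matOpNorm (-A) = matOpNorm A := by
  rw [matOpNorm_eq, matOpNorm_eq, map_neg, map_neg, norm_neg]

lemma matOpNorm_smul {l : ℕ} (t : ℝ) (A : Matrix (Fin l) (Fin l) ℂ) :
    matOpNorm (t • A) = |t| * matOpNorm A := by
  rw [matOpNorm_eq, matOpNorm_eq]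
  have h : (t • A) = ((t : ℂ)) • A := by
    ext i j; simp [Matrix.smul_apply, Complex.real_smul]
  rw [h, _root_.map_smul, _root_.map_smul]
  have := norm_smul (t : ℂ) (LinearMap.toContinuousLinearMap (Matrix.toEuclideanLin A))
  rw [this, Complex.norm_real, Real.norm_eq_abs]

lemma euclid_coord_le {l : ℕ} (w : EuclideanSpace ℂ (Fin l)) (i : Fin l) : ‖w i‖ ≤ ‖w‖ := by
  have h1 : (inner ℂ (EuclideanSpace.single i (1 : ℂ)) w : ℂ) = w i := by
    rw [EuclideanSpace.inner_single_left]; simp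
  calc ‖w i‖ = ‖(inner ℂ (EuclideanSpace.single i (1 : ℂ)) w : ℂ)‖ := by rw [h1]
    _ ≤ ‖EuclideanSpace.single i (1 : ℂ)‖ * ‖w‖ := norm_inner_le_norm _ _
    _ = ‖w‖ := by simp

lemma norm_entry_le_matOpNorm {l : ℕ} (A : Matrix (Fin l) (Fin l) ℂ) (i j : Fin l) :
    ‖A i j‖ ≤ matOpNorm A := by
  rw [matOpNorm_eq]
  set L := LinearMap.toContinuousLinearMap (Matrix.toEuclideanLin A) with hL
  set w : EuclideanSpace ℂ (Fin l) := L (EuclideanSpace.single j (1 : ℂ)) with hw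
  have h1 : A i j = w i := by
    simp only [hw, hL, LinearMap.coe_toContinuousLinearMap', Matrix.toEuclideanLin_apply]
    rw [show (EuclideanSpace.single j (1:ℂ)).ofLp = Pi.single j 1 from rfl]
    simp [Matrix.mulVec_single]
  rw [h1]
  calc ‖w i‖ ≤ ‖w‖ := euclid_coord_le w i
    _ ≤ ‖L‖ * ‖EuclideanSpace.single j (1 : ℂ)‖ := L.le_opNorm _
    _ = ‖L‖ := by rw [EuclideanSpace.norm_single, norm_one, mul_one]


lemma sInt_zero (ν : SignedMeasure α) : sInt ν (fun _ => 0) = 0 := by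
  simp [sInt]

lemma sInt_neg (ν : SignedMeasure α) (g : α → ℝ) :
    sInt ν (fun x => -(g x)) = - sInt ν g := by
  simp [sInt, integral_neg]
  ring

lemma sInt_smul (ν : SignedMeasure α) (t : ℝ) (g : α → ℝ) :
    sInt ν (fun x => t * g x) = t * sInt ν g := by
  simp [sInt, integral_const_mul]
  ring

/-- total variation bound for a signed measure -/
def sBound (ν : SignedMeasure α) : ℝ :=
  (ν.toJordanDecomposition.posPart Set.univ).toReal
    + (ν.toJordanDecomposition.negPart Set.univ).toReal

lemma sBound_nonneg (ν : SignedMeasure α) : 0 ≤ sBound ν := by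
  unfold sBound; positivity

lemma abs_sInt_le (ν : SignedMeasure α) (g : α → ℝ) (C : ℝ) (hC : 0 ≤ C)
    (hg : ∀ x, |g x| ≤ C) : |sInt ν g| ≤ C * sBound ν := by
  have h1 : ‖∫ x, g x ∂ν.toJordanDecomposition.posPart‖
      ≤ C * (ν.toJordanDecomposition.posPart Set.univ).toReal :=
    norm_integral_le_of_norm_le_const (Filter.Eventually.of_forall fun x => by
      simpa [Real.norm_eq_abs] using hg x)
  have h2 : ‖∫ x, g x ∂ν.toJordanDecomposition.negPart‖
      ≤ C * (ν.toJordanDecomposition.negPart Set.univ).toReal :=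
    norm_integral_le_of_norm_le_const (Filter.Eventually.of_forall fun x => by
      simpa [Real.norm_eq_abs] using hg x)
  rw [Real.norm_eq_abs] at h1 h2
  unfold sInt sBound
  calc |(∫ x, g x ∂ν.toJordanDecomposition.posPart)
      - ∫ x, g x ∂ν.toJordanDecomposition.negPart|
      ≤ |∫ x, g x ∂ν.toJordanDecomposition.posPart|
        + |∫ x, g x ∂ν.toJordanDecomposition.negPart| := abs_sub _ _
    _ ≤ _ := by rw [mul_add]; exact add_le_add h1 h2

lemma cInt_zero (ν : ComplexMeasure α) : cInt ν (fun _ => 0) = 0 := by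
  simp [cInt, sInt_zero]

lemma cInt_neg (ν : ComplexMeasure α) (g : α → ℂ) :
    cInt ν (fun x => -(g x)) = - cInt ν g := by
  simp only [cInt, Complex.neg_re, Complex.neg_im, sInt_neg]
  push_cast
  ring

lemma cInt_real_smul (ν : ComplexMeasure α) (t : ℝ) (g : α → ℂ) :
    cInt ν (fun x => (t : ℂ) * g x) = (t : ℂ) * cInt ν g := by
  simp only [cInt, Complex.mul_re, Complex.mul_im, Complex.ofReal_re, Complex.ofReal_im,
    zero_mul, sub_zero, mul_zero, zero_add, add_zero]
  have h1 : ∀ h : α → ℝ, sInt (ComplexMeasure.re ν) (fun x => t * h x)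
      = t * sInt (ComplexMeasure.re ν) h := fun h => sInt_smul _ t h
  have h2 : ∀ h : α → ℝ, sInt (ComplexMeasure.im ν) (fun x => t * h x)
      = t * sInt (ComplexMeasure.im ν) h := fun h => sInt_smul _ t h
  rw [h1, h2, h1, h2]
  push_cast
  ring

lemma abs_cInt_re_le (ν : ComplexMeasure α) (g : α → ℂ) (C : ℝ) (hC : 0 ≤ C)
    (hg : ∀ x, ‖g x‖ ≤ C) :
    |(cInt ν g).re| ≤ C * (sBound (ComplexMeasure.re ν) + sBound (ComplexMeasure.im ν)) := by
  have hre : ∀ x, |(g x).re| ≤ C := fun x => (Complex.abs_re_le_norm _).trans (hg x)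
  have him : ∀ x, |(g x).im| ≤ C := fun x => (Complex.abs_im_le_norm _).trans (hg x)
  have key : (cInt ν g).re = sInt (ComplexMeasure.re ν) (fun x => (g x).re)
      - sInt (ComplexMeasure.im ν) (fun x => (g x).im) := by
    simp [cInt]
  rw [key, mul_add]
  calc |sInt (ComplexMeasure.re ν) (fun x => (g x).re)
      - sInt (ComplexMeasure.im ν) (fun x => (g x).im)|
      ≤ |sInt (ComplexMeasure.re ν) (fun x => (g x).re)|
        + |sInt (ComplexMeasure.im ν) (fun x => (g x).im)| := abs_sub _ _
    _ ≤ _ := add_le_add (abs_sInt_le _ _ C hC hre) (abs_sInt_le _ _ C hC him)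



lemma trInt_zero {l : ℕ} (μ : VectorMeasure α (Matrix (Fin l) (Fin l) ℂ)) :
    trInt μ (fun _ => (0 : Matrix (Fin l) (Fin l) ℂ)) = 0 := by
  unfold trInt
  simp only [Matrix.zero_apply, cInt_zero, Finset.sum_const_zero]

lemma trInt_neg {l : ℕ} (μ : VectorMeasure α (Matrix (Fin l) (Fin l) ℂ))
    (f : α → Matrix (Fin l) (Fin l) ℂ) :
    trInt μ (fun x => -(f x)) = - trInt μ f := by
  unfold trInt
  simp only [Matrix.neg_apply, cInt_neg, Finset.sum_neg_distrib]

lemma trInt_smul {l : ℕ} (μ : VectorMeasure α (Matrix (Fin l) (Fin l) ℂ))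
    (t : ℝ) (f : α → Matrix (Fin l) (Fin l) ℂ) :
    trInt μ (fun x => t • (f x)) = (t : ℂ) * trInt μ f := by
  unfold trInt
  simp only [Matrix.smul_apply, Complex.real_smul, cInt_real_smul, Finset.mul_sum]

def mBound {l : ℕ} (μ : VectorMeasure α (Matrix (Fin l) (Fin l) ℂ)) : ℝ :=
  ∑ i : Fin l, ∑ j : Fin l,
    (sBound (ComplexMeasure.re (entryMeasure μ j i))
      + sBound (ComplexMeasure.im (entryMeasure μ j i)))

lemma abs_trInt_re_le {l : ℕ} (μ : VectorMeasure α (Matrix (Fin l) (Fin l) ℂ))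
    (f : α → Matrix (Fin l) (Fin l) ℂ) (κ : ℝ) (hκ : 0 ≤ κ)
    (hf : ∀ x, matOpNorm (f x) ≤ κ) :
    |(trInt μ f).re| ≤ κ * mBound μ := by
  unfold trInt mBound
  rw [Complex.re_sum]
  calc |∑ i : Fin l, (∑ j : Fin l, cInt (entryMeasure μ j i) fun x => f x i j).re|
      ≤ ∑ i : Fin l, |(∑ j : Fin l, cInt (entryMeasure μ j i) fun x => f x i j).re| :=
        Finset.abs_sum_le_sum_abs _ _
    _ ≤ ∑ i : Fin l, ∑ j : Fin l, |(cInt (entryMeasure μ j i) fun x => f x i j).re| := by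
        refine Finset.sum_le_sum fun i _ => ?_
        rw [Complex.re_sum]
        exact Finset.abs_sum_le_sum_abs _ _
    _ ≤ ∑ i : Fin l, ∑ j : Fin l, κ * (sBound (ComplexMeasure.re (entryMeasure μ j i))
          + sBound (ComplexMeasure.im (entryMeasure μ j i))) := by
        refine Finset.sum_le_sum fun i _ => Finset.sum_le_sum fun j _ => ?_
        exact abs_cInt_re_le _ _ κ hκ fun x => (norm_entry_le_matOpNorm (f x) i j).trans (hf x)
    _ = κ * ∑ i : Fin l, ∑ j : Fin l, (sBound (ComplexMeasure.re (entryMeasure μ j i))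
          + sBound (ComplexMeasure.im (entryMeasure μ j i))) := by
        rw [Finset.mul_sum]
        exact Finset.sum_congr rfl fun i _ => (Finset.mul_sum _ _ _).symm

/-- The set whose supremum defines `dWkMat`. -/
def dSet {a b : ℝ} {l : ℕ} (κ : ℝ)
    (μ₁ μ₂ : VectorMeasure (Set.Icc a b) (Matrix (Fin l) (Fin l) ℂ)) : Set ℝ :=
  { r : ℝ | ∃ f : Set.Icc a b → Matrix (Fin l) (Fin l) ℂ,
    Continuous f ∧ (∀ x, (f x).IsHermitian) ∧
    (∀ x y, matOpNorm (f x - f y) ≤ dist x y) ∧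
    (∀ x, matOpNorm (f x) ≤ κ) ∧
    r = (trInt μ₁ f - trInt μ₂ f).re }

lemma dWkMat_eq_sSup {a b : ℝ} {l : ℕ} (κ : ℝ)
    (μ₁ μ₂ : VectorMeasure (Set.Icc a b) (Matrix (Fin l) (Fin l) ℂ)) :
    dWkMat κ μ₁ μ₂ = sSup (dSet κ μ₁ μ₂) := rfl

lemma zero_mem_dSet {a b : ℝ} {l : ℕ} {κ : ℝ} (hκ : 0 ≤ κ)
    (μ₁ μ₂ : VectorMeasure (Set.Icc a b) (Matrix (Fin l) (Fin l) ℂ)) :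
    (0 : ℝ) ∈ dSet κ μ₁ μ₂ := by
  refine ⟨fun _ => 0, continuous_const, fun _ => Matrix.isHermitian_zero, ?_, ?_, ?_⟩
  · intro x y
    rw [sub_zero, matOpNorm_zero]
    exact dist_nonneg
  · intro x
    rw [matOpNorm_zero]
    exact hκ
  · rw [trInt_zero, trInt_zero, sub_zero, Complex.zero_re]

lemma bddAbove_dSet {a b : ℝ} {l : ℕ} {κ : ℝ} (hκ : 0 ≤ κ)
    (μ₁ μ₂ : VectorMeasure (Set.Icc a b) (Matrix (Fin l) (Fin l) ℂ)) :
    BddAbove (dSet κ μ₁ μ₂) := by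
  refine ⟨κ * mBound μ₁ + κ * mBound μ₂, ?_⟩
  rintro r ⟨f, _, _, _, hb, rfl⟩
  have h1 := abs_trInt_re_le μ₁ f κ hκ hb
  have h2 := abs_trInt_re_le μ₂ f κ hκ hb
  rw [Complex.sub_re]
  have := abs_le.mp h1
  have := abs_le.mp h2
  linarith [(abs_le.mp h1).2, (abs_le.mp h1).1, (abs_le.mp h2).2, (abs_le.mp h2).1]

lemma neg_fun_mem_dSet {a b : ℝ} {l : ℕ} {κ : ℝ}
    {μ₁ μ₂ : VectorMeasure (Set.Icc a b) (Matrix (Fin l) (Fin l) ℂ)}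
    {f : Set.Icc a b → Matrix (Fin l) (Fin l) ℂ}
    (hc : Continuous f) (hh : ∀ x, (f x).IsHermitian)
    (hl : ∀ x y, matOpNorm (f x - f y) ≤ dist x y) (hb : ∀ x, matOpNorm (f x) ≤ κ) :
    Continuous (fun x => -(f x)) ∧ (∀ x, (-(f x)).IsHermitian) ∧
    (∀ x y, matOpNorm (-(f x) - -(f y)) ≤ dist x y) ∧
    (∀ x, matOpNorm (-(f x)) ≤ κ) := by
  refine ⟨hc.neg, fun x => (hh x).neg, fun x y => ?_, fun x => ?_⟩
  · rw [neg_sub_neg]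
    rw [dist_comm]
    exact hl y x
  · rw [matOpNorm_neg]
    exact hb x

lemma neg_mem_dSet {a b : ℝ} {l : ℕ} {κ : ℝ}
    {μ₁ μ₂ : VectorMeasure (Set.Icc a b) (Matrix (Fin l) (Fin l) ℂ)} {r : ℝ}
    (hr : r ∈ dSet κ μ₁ μ₂) : -r ∈ dSet κ μ₁ μ₂ := by
  obtain ⟨f, hc, hh, hl, hb, rfl⟩ := hr
  obtain ⟨hc', hh', hl', hb'⟩ := neg_fun_mem_dSet (μ₁ := μ₁) (μ₂ := μ₂) hc hh hl hb
  refine ⟨fun x => -(f x), hc', hh', hl', hb', ?_⟩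
  rw [trInt_neg, trInt_neg]
  simp [Complex.sub_re]
  ring

lemma mem_dSet_symm {a b : ℝ} {l : ℕ} {κ : ℝ}
    {μ₁ μ₂ : VectorMeasure (Set.Icc a b) (Matrix (Fin l) (Fin l) ℂ)} {r : ℝ}
    (hr : r ∈ dSet κ μ₁ μ₂) : r ∈ dSet κ μ₂ μ₁ := by
  obtain ⟨f, hc, hh, hl, hb, rfl⟩ := hr
  obtain ⟨hc', hh', hl', hb'⟩ := neg_fun_mem_dSet (μ₁ := μ₁) (μ₂ := μ₂) hc hh hl hb
  refine ⟨fun x => -(f x), hc', hh', hl', hb', ?_⟩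
  rw [trInt_neg, trInt_neg]
  simp [Complex.sub_re]
  ring

lemma dWkMat_nonneg {a b : ℝ} {l : ℕ} {κ : ℝ} (hκ : 0 ≤ κ)
    (μ₁ μ₂ : VectorMeasure (Set.Icc a b) (Matrix (Fin l) (Fin l) ℂ)) :
    0 ≤ dWkMat κ μ₁ μ₂ := by
  rw [dWkMat_eq_sSup]
  exact le_csSup (bddAbove_dSet hκ μ₁ μ₂) (zero_mem_dSet hκ μ₁ μ₂)

lemma dWkMat_symm {a b : ℝ} {l : ℕ} {κ : ℝ} (hκ : 0 ≤ κ)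
    (μ₁ μ₂ : VectorMeasure (Set.Icc a b) (Matrix (Fin l) (Fin l) ℂ)) :
    dWkMat κ μ₁ μ₂ = dWkMat κ μ₂ μ₁ := by
  rw [dWkMat_eq_sSup, dWkMat_eq_sSup]
  congr 1
  ext r
  exact ⟨fun h => mem_dSet_symm h, fun h => mem_dSet_symm h⟩

lemma dWkMat_triangle {a b : ℝ} {l : ℕ} {κ : ℝ} (hκ : 0 ≤ κ)
    (μ₁ μ₂ μ₃ : VectorMeasure (Set.Icc a b) (Matrix (Fin l) (Fin l) ℂ)) :
    dWkMat κ μ₁ μ₃ ≤ dWkMat κ μ₁ μ₂ + dWkMat κ μ₂ μ₃ := by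
  rw [dWkMat_eq_sSup, dWkMat_eq_sSup, dWkMat_eq_sSup]
  refine csSup_le ⟨0, zero_mem_dSet hκ μ₁ μ₃⟩ ?_
  rintro r ⟨f, hc, hh, hl, hb, rfl⟩
  have m12 : (trInt μ₁ f - trInt μ₂ f).re ∈ dSet κ μ₁ μ₂ := ⟨f, hc, hh, hl, hb, rfl⟩
  have m23 : (trInt μ₂ f - trInt μ₃ f).re ∈ dSet κ μ₂ μ₃ := ⟨f, hc, hh, hl, hb, rfl⟩
  have h12 := le_csSup (bddAbove_dSet hκ μ₁ μ₂) m12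
  have h23 := le_csSup (bddAbove_dSet hκ μ₂ μ₃) m23
  have : (trInt μ₁ f - trInt μ₃ f).re
      = (trInt μ₁ f - trInt μ₂ f).re + (trInt μ₂ f - trInt μ₃ f).re := by
    simp [Complex.sub_re]
  rw [this]
  exact add_le_add h12 h23

lemma dSet_all_eq_zero {a b : ℝ} {l : ℕ} {κ : ℝ} (hκ : 0 ≤ κ)
    {μ₁ μ₂ : VectorMeasure (Set.Icc a b) (Matrix (Fin l) (Fin l) ℂ)}
    (h0 : dWkMat κ μ₁ μ₂ = 0) {r : ℝ} (hr : r ∈ dSet κ μ₁ μ₂) : r = 0 := by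
  rw [dWkMat_eq_sSup] at h0
  have h1 : r ≤ 0 := h0 ▸ le_csSup (bddAbove_dSet hκ μ₁ μ₂) hr
  have h2 : -r ≤ 0 := h0 ▸ le_csSup (bddAbove_dSet hκ μ₁ μ₂) (neg_mem_dSet hr)
  linarith


section HardA

open Filter Topology
open scoped NNReal ENNReal

variable {a b : ℝ}

lemma cont_integrable {g : Set.Icc a b → ℝ} (hg : Continuous g)
    (ρ : Measure (Set.Icc a b)) [IsFiniteMeasure ρ] : Integrable g ρ :=
  hg.integrable_of_hasCompactSupport (isClosed_tsupport _).isCompact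

lemma signedMeasure_ext_of_lipschitz (σ₁ σ₂ : SignedMeasure (Set.Icc a b))
    (h : ∀ g : Set.Icc a b → ℝ, (∃ K : ℝ≥0, LipschitzWith K g) → sInt σ₁ g = sInt σ₂ g) :
    σ₁ = σ₂ := by
  set P₁ := σ₁.toJordanDecomposition.posPart with hP₁
  set N₁ := σ₁.toJordanDecomposition.negPart with hN₁
  set P₂ := σ₂.toJordanDecomposition.posPart with hP₂
  set N₂ := σ₂.toJordanDecomposition.negPart with hN₂
  have hint : ∀ g : Set.Icc a b → ℝ, (∃ K : ℝ≥0, LipschitzWith K g) →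
      ∫ x, g x ∂(P₁ + N₂) = ∫ x, g x ∂(P₂ + N₁) := by
    intro g hg
    have hc : Continuous g := hg.choose_spec.continuous
    rw [integral_add_measure (cont_integrable hc _) (cont_integrable hc _),
        integral_add_measure (cont_integrable hc _) (cont_integrable hc _)]
    have hs := h g hg
    unfold sInt at hs
    rw [← hP₁, ← hN₁, ← hP₂, ← hN₂] at hs
    linarith
  have key : ∀ F : Set (Set.Icc a b), IsClosed F → (P₁ + N₂) F = (P₂ + N₁) F := by
    intro F hF
    rcases eq_or_ne F ∅ with rfl | hne
    · simp
    have hFne : F.Nonempty := Set.nonempty_iff_ne_empty.2 hne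
    set gs : ℕ → Set.Icc a b → ℝ :=
      fun n x => max 0 (1 - (n + 1 : ℝ) * Metric.infDist x F) with hgs
    have glip : ∀ n : ℕ, LipschitzWith ((n : ℝ≥0) + 1) (gs n) := by
      intro n
      apply LipschitzWith.of_dist_le_mul
      intro x y
      rw [Real.dist_eq]
      have h1 : |(1 - (n + 1 : ℝ) * Metric.infDist x F)
          - (1 - (n + 1 : ℝ) * Metric.infDist y F)|
          = (n + 1 : ℝ) * |Metric.infDist x F - Metric.infDist y F| := by
        have e : (1 - (n + 1 : ℝ) * Metric.infDist x F)
            - (1 - (n + 1 : ℝ) * Metric.infDist y F)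
            = (n + 1 : ℝ) * (Metric.infDist y F - Metric.infDist x F) := by ring
        rw [e, abs_mul, abs_of_nonneg (by positivity : (0:ℝ) ≤ (n + 1 : ℝ)), abs_sub_comm]
      have h2 : |Metric.infDist x F - Metric.infDist y F| ≤ dist x y := by
        have := (Metric.lipschitz_infDist_pt F).dist_le_mul x y
        rwa [Real.dist_eq, NNReal.coe_one, one_mul] at this
      calc |gs n x - gs n y|
          ≤ |(1 - (n + 1 : ℝ) * Metric.infDist x F)
            - (1 - (n + 1 : ℝ) * Metric.infDist y F)| := by
            simpa [hgs, max_comm] using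
              abs_max_sub_max_le_abs (1 - (n + 1 : ℝ) * Metric.infDist x F)
                (1 - (n + 1 : ℝ) * Metric.infDist y F) 0
        _ ≤ ((n : ℝ≥0) + 1 : ℝ≥0) * dist x y := by
            rw [h1]
            push_cast
            exact mul_le_mul_of_nonneg_left h2 (by positivity)
    have gmem : ∀ n x, 0 ≤ gs n x ∧ gs n x ≤ 1 := by
      intro n x
      refine ⟨le_max_left _ _, ?_⟩
      apply max_le zero_le_one
      have : 0 ≤ (n + 1 : ℝ) * Metric.infDist x F := by
        have := Metric.infDist_nonneg (s := F) (x := x)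
        positivity
      linarith
    have hlim : ∀ (ρ : Measure (Set.Icc a b)), IsFiniteMeasure ρ →
        Tendsto (fun n => ∫ x, gs n x ∂ρ) atTop (𝓝 ((ρ F).toReal)) := by
      intro ρ hfin
      have hind : (ρ F).toReal = ∫ x, F.indicator (1 : Set.Icc a b → ℝ) x ∂ρ := by
        rw [MeasureTheory.integral_indicator_one hF.measurableSet]; rfl
      rw [hind]
      apply tendsto_integral_of_dominated_convergence (fun _ => (1:ℝ))
      · exact fun n => ((glip n).continuous).aestronglyMeasurable
      · exact integrable_const 1
      · intro n
        refine Filter.Eventually.of_forall fun x => ?_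
        rw [Real.norm_eq_abs, abs_le]
        exact ⟨by linarith [(gmem n x).1], (gmem n x).2⟩
      · refine Filter.Eventually.of_forall fun x => ?_
        by_cases hx : x ∈ F
        · have hval : ∀ n, gs n x = 1 := by
            intro n
            rw [hgs]
            simp [Metric.infDist_zero_of_mem hx]
          rw [Set.indicator_of_mem hx]
          simpa [hval] using tendsto_const_nhds (x := (1:ℝ)) (f := atTop (α := ℕ))
        · have hd : 0 < Metric.infDist x F := (hF.notMem_iff_infDist_pos hFne).1 hx
          rw [Set.indicator_of_notMem hx]
          obtain ⟨N, hN⟩ := exists_nat_ge (1 / Metric.infDist x F)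
          have hev : ∀ᶠ n in atTop, gs n x = 0 := by
            refine Filter.eventually_atTop.2 ⟨N, fun n hn => ?_⟩
            have h1 : (1:ℝ) ≤ (n + 1 : ℝ) * Metric.infDist x F := by
              have : (1:ℝ) / Metric.infDist x F ≤ (n + 1 : ℝ) := by
                have : (N:ℝ) ≤ (n:ℝ) := by exact_mod_cast hn
                linarith
              calc (1:ℝ) = (1 / Metric.infDist x F) * Metric.infDist x F := by
                    field_simp
                _ ≤ (n + 1 : ℝ) * Metric.infDist x F :=
                    mul_le_mul_of_nonneg_right this hd.le
            rw [hgs]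
            simp only
            rw [max_eq_left (by linarith)]
          refine Tendsto.congr' ?_ (tendsto_const_nhds (x := (0:ℝ)))
          filter_upwards [hev] with n hn using hn.symm
    have t1 := hlim (P₁ + N₂) inferInstance
    have t2 := hlim (P₂ + N₁) inferInstance
    have heq : (fun n => ∫ x, gs n x ∂(P₁ + N₂)) = fun n => ∫ x, gs n x ∂(P₂ + N₁) := by
      funext n
      exact hint (gs n) ⟨_, glip n⟩
    rw [heq] at t1
    have := tendsto_nhds_unique t1 t2
    exact (ENNReal.toReal_eq_toReal_iff' (measure_ne_top _ _) (measure_ne_top _ _)).1 this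
  have hmeq : P₁ + N₂ = P₂ + N₁ := by
    refine MeasureTheory.ext_of_generate_finite {s : Set (Set.Icc a b) | IsClosed s} ?_
      isPiSystem_isClosed (fun F hF => key F hF) (key _ isClosed_univ)
    rw [BorelSpace.measurable_eq (α := Set.Icc a b), borel_eq_generateFrom_isClosed]
  ext s hs
  have h1 : ∀ (σ : SignedMeasure (Set.Icc a b)),
      σ s = (σ.toJordanDecomposition.posPart s).toReal
        - (σ.toJordanDecomposition.negPart s).toReal := by
    intro σ
    conv_lhs => rw [← σ.toSignedMeasure_toJordanDecomposition]
    rw [JordanDecomposition.toSignedMeasure, VectorMeasure.sub_apply,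
      Measure.toSignedMeasure_apply_measurable hs, Measure.toSignedMeasure_apply_measurable hs]
    rfl
  rw [h1 σ₁, h1 σ₂]
  have happ : P₁ s + N₂ s = P₂ s + N₁ s := by
    have := congrArg (fun m => m s) hmeq
    simpa [Measure.add_apply] using this
  have htr : (P₁ s).toReal + (N₂ s).toReal = (P₂ s).toReal + (N₁ s).toReal := by
    rw [← ENNReal.toReal_add (measure_ne_top _ _) (measure_ne_top _ _),
      ← ENNReal.toReal_add (measure_ne_top _ _) (measure_ne_top _ _), happ]
  rw [← hP₁, ← hN₁, ← hP₂, ← hN₂]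
  linarith

end HardA
section HardB

open Filter Topology
open scoped NNReal

variable {α : Type*} [MeasurableSpace α]

lemma entryMeasure_apply {l : ℕ} (μ : VectorMeasure α (Matrix (Fin l) (Fin l) ℂ))
    (i j : Fin l) (s : Set α) : entryMeasure μ i j s = μ s i j :=
  VectorMeasure.mapRange_apply _ _

lemma sInt_mul_right (ν : SignedMeasure α) (t : ℝ) (g : α → ℝ) :
    sInt ν (fun x => g x * t) = sInt ν g * t := by
  unfold sInt
  rw [integral_mul_const, integral_mul_const]
  ring

lemma sInt_neg_measure (σ : SignedMeasure α) (g : α → ℝ) :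
    sInt (-σ) g = - sInt σ g := by
  unfold sInt
  rw [MeasureTheory.SignedMeasure.toJordanDecomposition_neg,
    MeasureTheory.JordanDecomposition.neg_posPart, MeasureTheory.JordanDecomposition.neg_negPart]
  ring

lemma cInt_re (ν : ComplexMeasure α) (g : α → ℂ) :
    (cInt ν g).re = sInt (ComplexMeasure.re ν) (fun x => (g x).re)
      - sInt (ComplexMeasure.im ν) (fun x => (g x).im) := by
  simp [cInt]

lemma cInt_re_real_mul (ν : ComplexMeasure α) (g : α → ℝ) (c : ℂ) :
    (cInt ν (fun x => (g x : ℂ) * c)).re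
      = c.re * sInt (ComplexMeasure.re ν) g - c.im * sInt (ComplexMeasure.im ν) g := by
  rw [cInt_re]
  have hre : (fun x => ((g x : ℂ) * c).re) = fun x => g x * c.re := by
    funext x; simp [Complex.mul_re]
  have him : (fun x => ((g x : ℂ) * c).im) = fun x => g x * c.im := by
    funext x; simp [Complex.mul_im]
  rw [hre, him, sInt_mul_right, sInt_mul_right]
  ring

lemma trInt_re_smul {l : ℕ} (μ : VectorMeasure α (Matrix (Fin l) (Fin l) ℂ))
    (g : α → ℝ) (E : Matrix (Fin l) (Fin l) ℂ) :
    (trInt μ (fun x => g x • E)).re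
      = ∑ p : Fin l, ∑ q : Fin l,
        ((E p q).re * sInt (ComplexMeasure.re (entryMeasure μ q p)) g
          - (E p q).im * sInt (ComplexMeasure.im (entryMeasure μ q p)) g) := by
  unfold trInt
  rw [Complex.re_sum]
  refine Finset.sum_congr rfl fun p _ => ?_
  rw [Complex.re_sum]
  refine Finset.sum_congr rfl fun q _ => ?_
  have hfun : (fun x => (g x • E) p q) = fun x => (g x : ℂ) * E p q := by
    funext x
    simp [Matrix.smul_apply, Complex.real_smul]
  rw [hfun, cInt_re_real_mul]

lemma double_sum_single {l : ℕ} (k : Fin l) (F : Fin l → Fin l → ℝ)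
    (h : ∀ p q, ¬(p = k ∧ q = k) → F p q = 0) :
    (∑ p : Fin l, ∑ q : Fin l, F p q) = F k k := by
  rw [Finset.sum_eq_single k]
  · exact Finset.sum_eq_single k (fun q _ hq => h k q (by tauto)) (by simp)
  · intro p _ hp
    exact Finset.sum_eq_zero fun q _ => h p q (by tauto)
  · simp

lemma double_sum_pair {l : ℕ} {j k : Fin l} (hjk : j ≠ k) (F : Fin l → Fin l → ℝ)
    (h : ∀ p q, ¬(p = j ∧ q = k) → ¬(p = k ∧ q = j) → F p q = 0) :
    (∑ p : Fin l, ∑ q : Fin l, F p q) = F j k + F k j := by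
  have h2 : ∑ q : Fin l, F j q = F j k :=
    Finset.sum_eq_single k (fun q _ hq => h j q (by tauto) (fun hc => hjk hc.1)) (by simp)
  have h3 : ∑ q : Fin l, F k q = F k j :=
    Finset.sum_eq_single j (fun q _ hq => h k q (fun hc => hjk hc.1.symm) (by tauto)) (by simp)
  calc (∑ p : Fin l, ∑ q : Fin l, F p q) = ∑ p ∈ ({j, k} : Finset (Fin l)), ∑ q : Fin l, F p q := by
        refine (Finset.sum_subset (Finset.subset_univ _) ?_).symm
        intro p _ hp
        simp only [Finset.mem_insert, Finset.mem_singleton] at hp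
        push_neg at hp
        exact Finset.sum_eq_zero fun q _ => h p q (fun hc => hp.1 hc.1) (fun hc => hp.2 hc.1)
    _ = F j k + F k j := by rw [Finset.sum_pair hjk, h2, h3]

lemma real_smul_isHermitian {l : ℕ} {E : Matrix (Fin l) (Fin l) ℂ} (hE : E.IsHermitian)
    (t : ℝ) : (t • E).IsHermitian := by
  unfold Matrix.IsHermitian at *
  ext p q
  rw [Matrix.conjTranspose_apply, Matrix.smul_apply, Matrix.smul_apply, Complex.real_smul,
    Complex.real_smul, star_mul', Complex.star_def, Complex.conj_ofReal]
  have : (starRingEnd ℂ) (E q p) = E p q := by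
    have := congrFun (congrFun hE p) q
    rw [Matrix.conjTranspose_apply] at this
    exact this
  rw [this]

lemma isHermitian_E1 {l : ℕ} (k : Fin l) :
    (Matrix.of fun p q => if p = k ∧ q = k then (1 : ℂ) else 0 :
      Matrix (Fin l) (Fin l) ℂ).IsHermitian := by
  unfold Matrix.IsHermitian
  ext p q
  rw [Matrix.conjTranspose_apply, Matrix.of_apply, Matrix.of_apply]
  split_ifs with h1 h2 h2 <;> simp_all <;> tauto

lemma isHermitian_E2 {l : ℕ} (j k : Fin l) :
    (Matrix.of fun p q => if (p = j ∧ q = k) ∨ (p = k ∧ q = j) then (1 : ℂ) else 0 :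
      Matrix (Fin l) (Fin l) ℂ).IsHermitian := by
  unfold Matrix.IsHermitian
  ext p q
  rw [Matrix.conjTranspose_apply, Matrix.of_apply, Matrix.of_apply]
  split_ifs with h1 h2 h2 <;> simp_all <;> tauto

lemma isHermitian_E3 {l : ℕ} {j k : Fin l} (hjk : j ≠ k) :
    (Matrix.of fun p q => if p = j ∧ q = k then Complex.I
      else if p = k ∧ q = j then -Complex.I else 0 :
      Matrix (Fin l) (Fin l) ℂ).IsHermitian := by
  unfold Matrix.IsHermitian
  ext p q
  rw [Matrix.conjTranspose_apply, Matrix.of_apply, Matrix.of_apply]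
  split_ifs <;> simp_all [Complex.conj_I] <;> tauto

end HardB
section HardC

open Filter Topology
open scoped NNReal

lemma dWkMat_eq_zero_imp {a b : ℝ} (hab : a ≤ b) {l : ℕ} {κ : ℝ} (hκ : 0 < κ)
    {μ₁ μ₂ : VectorMeasure (Set.Icc a b) (Matrix (Fin l) (Fin l) ℂ)}
    (h₁ : ∀ s, MeasurableSet s → (μ₁ s).PosSemidef)
    (h₂ : ∀ s, MeasurableSet s → (μ₂ s).PosSemidef)
    (h0 : dWkMat κ μ₁ μ₂ = 0) : μ₁ = μ₂ := by
  classical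
  -- Step 1: scaling argument
  have H : ∀ (E : Matrix (Fin l) (Fin l) ℂ), E.IsHermitian →
      ∀ (g : Set.Icc a b → ℝ), (∃ K : ℝ≥0, LipschitzWith K g) →
      (trInt μ₁ (fun x => g x • E)).re = (trInt μ₂ (fun x => g x • E)).re := by
    intro E hE g hgl
    obtain ⟨K, hg⟩ := hgl
    set c := matOpNorm E with hc
    have hc0 : 0 ≤ c := matOpNorm_nonneg E
    obtain ⟨C, hC⟩ := isCompact_univ.exists_bound_of_continuousOn
      (hg.continuous.continuousOn (s := Set.univ))
    set M := max C 0 with hMdef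
    have hM : ∀ x, |g x| ≤ M := fun x => by
      have := hC x trivial
      rw [Real.norm_eq_abs] at this
      exact this.trans (le_max_left _ _)
    have hM0 : 0 ≤ M := le_max_right _ _
    have hK0 : 0 ≤ (K : ℝ) := K.coe_nonneg
    set t := min (1 / ((K : ℝ) * c + 1)) (κ / (M * c + 1)) with htdef
    have ht : 0 < t := lt_min (by positivity) (by positivity)
    have htK : t * ((K : ℝ) * c) ≤ 1 := by
      have h1 : t ≤ 1 / ((K : ℝ) * c + 1) := min_le_left _ _
      have h2 : (0:ℝ) < (K : ℝ) * c + 1 := by positivity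
      rw [le_div_iff₀ h2] at h1
      nlinarith
    have htM : t * (M * c) ≤ κ := by
      have h1 : t ≤ κ / (M * c + 1) := min_le_right _ _
      have h2 : (0:ℝ) < M * c + 1 := by positivity
      rw [le_div_iff₀ h2] at h1
      nlinarith
    have hmem : (trInt μ₁ (fun x => t • (g x • E))
        - trInt μ₂ (fun x => t • (g x • E))).re ∈ dSet κ μ₁ μ₂ := by
      refine ⟨fun x => t • (g x • E), ?_, ?_, ?_, ?_, rfl⟩
      · exact (hg.continuous.smul continuous_const).const_smul t
      · exact fun x => real_smul_isHermitian (real_smul_isHermitian hE (g x)) t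
      · intro x y
        show matOpNorm (t • (g x • E) - t • (g y • E)) ≤ dist x y
        have e1 : t • (g x • E) - t • (g y • E) = (t * g x - t * g y) • E := by
          rw [smul_smul, smul_smul, ← sub_smul]
        rw [e1, matOpNorm_smul]
        have e2 : |t * g x - t * g y| ≤ t * ((K : ℝ) * dist x y) := by
          have e3 : t * g x - t * g y = t * (g x - g y) := by ring
          rw [e3, abs_mul, abs_of_pos ht]
          refine mul_le_mul_of_nonneg_left ?_ ht.le
          have := hg.dist_le_mul x y
          rwa [Real.dist_eq] at this
        calc |t * g x - t * g y| * c ≤ (t * ((K : ℝ) * dist x y)) * c :=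
              mul_le_mul_of_nonneg_right e2 hc0
          _ = (t * ((K : ℝ) * c)) * dist x y := by ring
          _ ≤ 1 * dist x y := mul_le_mul_of_nonneg_right htK dist_nonneg
          _ = dist x y := one_mul _
      · intro x
        show matOpNorm (t • (g x • E)) ≤ κ
        rw [smul_smul, matOpNorm_smul]
        calc |t * g x| * c ≤ (t * M) * c := by
              refine mul_le_mul_of_nonneg_right ?_ hc0
              rw [abs_mul, abs_of_pos ht]
              exact mul_le_mul_of_nonneg_left (hM x) ht.le
          _ = t * (M * c) := by ring
          _ ≤ κ := htM
    have hz := dSet_all_eq_zero hκ.le h0 hmem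
    rw [trInt_smul μ₁ t (fun x => g x • E), trInt_smul μ₂ t (fun x => g x • E),
      ← mul_sub, Complex.re_ofReal_mul] at hz
    rcases mul_eq_zero.mp hz with h | h
    · exact absurd h ht.ne'
    · rw [Complex.sub_re] at h
      linarith
  -- Step 2: Hermitian symmetry of entry measures
  have hresym : ∀ (μ : VectorMeasure (Set.Icc a b) (Matrix (Fin l) (Fin l) ℂ)),
      (∀ s, MeasurableSet s → (μ s).IsHermitian) → ∀ p q : Fin l,
      ComplexMeasure.re (entryMeasure μ p q) = ComplexMeasure.re (entryMeasure μ q p) := by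
    intro μ hH p q
    refine MeasureTheory.VectorMeasure.ext fun s hs => ?_
    show (μ s p q).re = (μ s q p).re
    have h3 := congrArg Complex.re ((hH s hs).apply p q)
    rw [Complex.star_def, Complex.conj_re] at h3
    exact h3.symm
  have himanti : ∀ (μ : VectorMeasure (Set.Icc a b) (Matrix (Fin l) (Fin l) ℂ)),
      (∀ s, MeasurableSet s → (μ s).IsHermitian) → ∀ p q : Fin l,
      ComplexMeasure.im (entryMeasure μ p q) = - ComplexMeasure.im (entryMeasure μ q p) := by
    intro μ hH p q
    refine MeasureTheory.VectorMeasure.ext fun s hs => ?_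
    rw [MeasureTheory.VectorMeasure.neg_apply]
    show (μ s p q).im = -((μ s q p).im)
    have h3 := congrArg Complex.im ((hH s hs).apply q p)
    rw [Complex.star_def, Complex.conj_im] at h3
    linarith
  have herm₁ : ∀ s, MeasurableSet s → (μ₁ s).IsHermitian := fun s hs => (h₁ s hs).isHermitian
  have herm₂ : ∀ s, MeasurableSet s → (μ₂ s).IsHermitian := fun s hs => (h₂ s hs).isHermitian
  have neg_self_zero : ∀ (σ : SignedMeasure (Set.Icc a b)), σ = -σ → σ = 0 := by
    intro σ hσ
    refine MeasureTheory.VectorMeasure.ext fun s hs => ?_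
    have := congrArg (fun v : SignedMeasure (Set.Icc a b) => v s) hσ
    simp only [MeasureTheory.VectorMeasure.neg_apply] at this
    rw [MeasureTheory.VectorMeasure.zero_apply]
    linarith
  -- Step 3: per-entry real parts agree
  have key_re : ∀ j k : Fin l,
      ComplexMeasure.re (entryMeasure μ₁ j k) = ComplexMeasure.re (entryMeasure μ₂ j k) := by
    intro j k
    by_cases hjk : j = k
    · subst hjk
      apply signedMeasure_ext_of_lipschitz
      intro g hg
      have hH := H (Matrix.of fun p q => if p = j ∧ q = j then (1 : ℂ) else 0)
        (isHermitian_E1 j) g hg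
      rw [trInt_re_smul, trInt_re_smul, double_sum_single j, double_sum_single j] at hH
      · simpa using hH
      · intro p q hpq
        simp only [Matrix.of_apply, if_neg hpq, Complex.zero_re, Complex.zero_im]
        ring
      · intro p q hpq
        simp only [Matrix.of_apply, if_neg hpq, Complex.zero_re, Complex.zero_im]
        ring
    · apply signedMeasure_ext_of_lipschitz
      intro g hg
      have hH := H (Matrix.of fun p q =>
          if (p = j ∧ q = k) ∨ (p = k ∧ q = j) then (1 : ℂ) else 0)
        (isHermitian_E2 j k) g hg
      rw [trInt_re_smul, trInt_re_smul, double_sum_pair hjk, double_sum_pair hjk] at hH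
      · have e1 : ComplexMeasure.re (entryMeasure μ₁ k j)
            = ComplexMeasure.re (entryMeasure μ₁ j k) := hresym μ₁ herm₁ k j
        have e2 : ComplexMeasure.re (entryMeasure μ₂ k j)
            = ComplexMeasure.re (entryMeasure μ₂ j k) := hresym μ₂ herm₂ k j
        have v1 : (Matrix.of fun p q =>
            if (p = j ∧ q = k) ∨ (p = k ∧ q = j) then (1 : ℂ) else 0) j k = 1 := by
          simp
        have v2 : (Matrix.of fun p q =>
            if (p = j ∧ q = k) ∨ (p = k ∧ q = j) then (1 : ℂ) else 0) k j = 1 := by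
          simp
        rw [v1, v2] at hH
        simp only [Complex.one_re, Complex.one_im, one_mul, zero_mul, sub_zero] at hH
        rw [e1, e2] at hH
        linarith
      · intro p q hpq1 hpq2
        simp only [Matrix.of_apply, if_neg (by tauto : ¬((p = j ∧ q = k) ∨ (p = k ∧ q = j))),
          Complex.zero_re, Complex.zero_im]
        ring
      · intro p q hpq1 hpq2
        simp only [Matrix.of_apply, if_neg (by tauto : ¬((p = j ∧ q = k) ∨ (p = k ∧ q = j))),
          Complex.zero_re, Complex.zero_im]
        ring
  -- Step 4: per-entry imaginary parts agree
  have key_im : ∀ j k : Fin l,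
      ComplexMeasure.im (entryMeasure μ₁ j k) = ComplexMeasure.im (entryMeasure μ₂ j k) := by
    intro j k
    by_cases hjk : j = k
    · subst hjk
      have z1 : ComplexMeasure.im (entryMeasure μ₁ j j) = 0 := by
        apply neg_self_zero
        conv_lhs => rw [himanti μ₁ herm₁ j j]
      have z2 : ComplexMeasure.im (entryMeasure μ₂ j j) = 0 := by
        apply neg_self_zero
        conv_lhs => rw [himanti μ₂ herm₂ j j]
      rw [z1, z2]
    · apply signedMeasure_ext_of_lipschitz
      intro g hg
      have hH := H (Matrix.of fun p q => if p = j ∧ q = k then Complex.I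
          else if p = k ∧ q = j then -Complex.I else 0)
        (isHermitian_E3 hjk) g hg
      rw [trInt_re_smul, trInt_re_smul, double_sum_pair hjk, double_sum_pair hjk] at hH
      · have e1 := himanti μ₁ herm₁ k j
        have e2 := himanti μ₂ herm₂ k j
        have v1 : (Matrix.of fun p q => if p = j ∧ q = k then Complex.I
            else if p = k ∧ q = j then -Complex.I else 0) j k = Complex.I := by
          simp
        have v2 : (Matrix.of fun p q => if p = j ∧ q = k then Complex.I
            else if p = k ∧ q = j then -Complex.I else 0) k j = -Complex.I := by
          simp [hjk, Ne.symm hjk]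
        rw [v1, v2] at hH
        simp only [Complex.I_re, Complex.I_im, Complex.neg_re, Complex.neg_im,
          zero_mul, one_mul, neg_neg, neg_zero, zero_sub, sub_zero] at hH
        rw [e1, e2] at hH
        simp only [sInt_neg_measure] at hH
        linarith
      · intro p q hpq1 hpq2
        simp only [Matrix.of_apply, if_neg (by tauto : ¬(p = j ∧ q = k)),
          if_neg (by tauto : ¬(p = k ∧ q = j)), Complex.zero_re, Complex.zero_im]
        ring
      · intro p q hpq1 hpq2
        simp only [Matrix.of_apply, if_neg (by tauto : ¬(p = j ∧ q = k)),
          if_neg (by tauto : ¬(p = k ∧ q = j)), Complex.zero_re, Complex.zero_im]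
        ring
  -- Step 5: conclude
  refine MeasureTheory.VectorMeasure.ext fun s hs => ?_
  ext j k
  have hre := congrArg (fun v : SignedMeasure (Set.Icc a b) => v s) (key_re j k)
  have him := congrArg (fun v : SignedMeasure (Set.Icc a b) => v s) (key_im j k)
  have hre' : (μ₁ s j k).re = (μ₂ s j k).re := hre
  have him' : (μ₁ s j k).im = (μ₂ s j k).im := him
  exact Complex.ext hre' him'

end HardC


/-- for `κ > 0`, `d_{W₁,κ}` is a metric on positive-semidefinite
matrix-valued finite Borel measures on a compact interval: nonnegative, symmetric,
satisfying the triangle inequality, and vanishing exactly on equal measures. -/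
theorem dWkMat_is_metric {a b : ℝ} (hab : a ≤ b) {l : ℕ} (κ : ℝ) (hκ : 0 < κ) :
    (∀ μ₁ μ₂ : VectorMeasure (Set.Icc a b) (Matrix (Fin l) (Fin l) ℂ),
      (∀ s, MeasurableSet s → (μ₁ s).PosSemidef) →
      (∀ s, MeasurableSet s → (μ₂ s).PosSemidef) →
      0 ≤ dWkMat κ μ₁ μ₂) ∧
    (∀ μ₁ μ₂ : VectorMeasure (Set.Icc a b) (Matrix (Fin l) (Fin l) ℂ),
      (∀ s, MeasurableSet s → (μ₁ s).PosSemidef) →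
      (∀ s, MeasurableSet s → (μ₂ s).PosSemidef) →
      dWkMat κ μ₁ μ₂ = dWkMat κ μ₂ μ₁) ∧
    (∀ μ₁ μ₂ μ₃ : VectorMeasure (Set.Icc a b) (Matrix (Fin l) (Fin l) ℂ),
      (∀ s, MeasurableSet s → (μ₁ s).PosSemidef) →
      (∀ s, MeasurableSet s → (μ₂ s).PosSemidef) →
      (∀ s, MeasurableSet s → (μ₃ s).PosSemidef) →
      dWkMat κ μ₁ μ₃ ≤ dWkMat κ μ₁ μ₂ + dWkMat κ μ₂ μ₃) ∧
    (∀ μ₁ μ₂ : VectorMeasure (Set.Icc a b) (Matrix (Fin l) (Fin l) ℂ),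
      (∀ s, MeasurableSet s → (μ₁ s).PosSemidef) →
      (∀ s, MeasurableSet s → (μ₂ s).PosSemidef) →
      dWkMat κ μ₁ μ₂ = 0 → μ₁ = μ₂) := by
  refine ⟨fun μ₁ μ₂ _ _ => dWkMat_nonneg hκ.le μ₁ μ₂,
    fun μ₁ μ₂ _ _ => dWkMat_symm hκ.le μ₁ μ₂,
    fun μ₁ μ₂ μ₃ _ _ _ => dWkMat_triangle hκ.le μ₁ μ₂ μ₃,
    fun μ₁ μ₂ h₁ h₂ h0 => dWkMat_eq_zero_imp hab hκ h₁ h₂ h0⟩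

end
end
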